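/- arXiv:0912.3222 — 5 statements merged into one kernel-verified Lean document; each statement's English description precedes it below -/
import Mathlib

section
/- Let T be an n×n real matrix and b ∈ ℝⁿ. If x ∈ ℝⁿ satisfies the piecewise linear system min{0,x} + T·max{0,x} = b, then the vector y = max{0,x} is a solution of the linear complementarity problem: T·y ≥ b (componentwise), y ≥ 0 (componentwise), and yᵀ(T·y − b) = 0. -/
open Matrix

/-- Spectral radius of a real matrix: supremum of absolute values of its complex eigenvalues. -/
noncomputable def specRad {n : ℕ} (B : Matrix (Fin n) (Fin n) ℝ) : ℝ :=
  sSup {r : ℝ | ∃ μ ∈ spectrum ℂ (B.map (fun a => (a : ℂ))), r = ‖μ‖}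

/-- `T` is an M-matrix: `T = α•I - B` with `B ≥ O` entrywise and `ρ(B) < α`. -/
def IsMmat {n : ℕ} (T : Matrix (Fin n) (Fin n) ℝ) : Prop :=
  ∃ (α : ℝ) (B : Matrix (Fin n) (Fin n) ℝ),
    (∀ i j, 0 ≤ B i j) ∧ specRad B < α ∧ T = α • (1 : Matrix (Fin n) (Fin n) ℝ) - B

/-- `P(x)`: diagonal matrix with i-th entry `1` if `x i ≥ 0`, else `0`. -/
noncomputable def Pmat {n : ℕ} (x : Fin n → ℝ) : Matrix (Fin n) (Fin n) ℝ :=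
  Matrix.diagonal fun i => if 0 ≤ x i then 1 else 0

/-- Irreducibility of a matrix (strong connectivity of its directed graph). -/
def IsIrred {n : ℕ} (T : Matrix (Fin n) (Fin n) ℝ) : Prop :=
  ∀ S : Finset (Fin n), S.Nonempty → S ≠ Finset.univ → ∃ i ∈ S, ∃ j ∉ S, T i j ≠ 0

/-- Condition T2: `T` is irreducible, `null(Tᵀ) = span(v)`, `null(T) = span(w)` with
`v, w > 0` componentwise, and `T + D` is an M-matrix for every diagonal `D ≥ O`, `D ≠ O`. -/
def CondT2 {n : ℕ} (T : Matrix (Fin n) (Fin n) ℝ) (v w : Fin n → ℝ) : Prop :=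
  IsIrred T ∧ (∀ i, 0 < v i) ∧ (∀ i, 0 < w i) ∧
  LinearMap.ker (Matrix.mulVecLin Tᵀ) = Submodule.span ℝ {v} ∧
  LinearMap.ker (Matrix.mulVecLin T) = Submodule.span ℝ {w} ∧
  (∀ d : Fin n → ℝ, (∀ i, 0 ≤ d i) → d ≠ 0 → IsMmat (T + Matrix.diagonal d))

/-- If `x` solves `min{0,x} + T·max{0,x} = b`, then `y = max{0,x}` solves the
LCP: `T·y ≥ b`, `y ≥ 0`, `yᵀ(T·y − b) = 0`. -/
theorem stmt0 {n : ℕ} (T : Matrix (Fin n) (Fin n) ℝ) (b x : Fin n → ℝ)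
    (h : (fun i => min 0 (x i)) + T *ᵥ (fun i => max 0 (x i)) = b) :
    ∀ y : Fin n → ℝ, y = (fun i => max 0 (x i)) →
      (∀ i, b i ≤ (T *ᵥ y) i) ∧ (∀ i, 0 ≤ y i) ∧ y ⬝ᵥ (T *ᵥ y - b) = 0 := by
  intro y hy
  subst hy
  have hb : ∀ i, (T *ᵥ fun i => max 0 (x i)) i - b i = - min 0 (x i) := by
    intro i
    have := congrFun h i
    simp [Pi.add_apply] at this
    linarith
  refine ⟨fun i => ?_, fun i => le_max_left _ _, ?_⟩
  · have := hb i
    have hm : min 0 (x i) ≤ 0 := min_le_left _ _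
    linarith
  · unfold dotProduct
    apply Finset.sum_eq_zero
    intro i _
    have : ((T *ᵥ fun i => max 0 (x i)) - b) i = - min 0 (x i) := by
      simpa [Pi.sub_apply] using hb i
    rw [this]
    rcases le_or_gt (x i) 0 with hx | hx
    · simp [max_eq_left hx]
    · simp [min_eq_left hx.le]
end

section
/- Let T be an n×n real M-matrix, i.e. T = αI − B with B ≥ O entrywise and ρ(B) < α, where ρ denotes the spectral radius. Then for any diagonal matrix P with O ≤ P ≤ I (entrywise), both I − P + T·P and I − P + P·T are M-matrices; in particular their inverses exist and satisfy (I − P + T·P)⁻¹ ≥ O and (I − P + P·T)⁻¹ ≥ O entrywise. -/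
open Matrix

section Aux

open Filter

attribute [local instance] Matrix.linftyOpNormedRing Matrix.linftyOpNormedAlgebra






lemma specRad_nonneg {n : ℕ} (B : Matrix (Fin n) (Fin n) ℝ) : 0 ≤ specRad B := by
  apply Real.sSup_nonneg
  rintro r ⟨μ, _, rfl⟩
  exact norm_nonneg μ

lemma specSet_bddAbove {n : ℕ} (B : Matrix (Fin n) (Fin n) ℝ) :
    BddAbove {r : ℝ | ∃ μ ∈ spectrum ℂ (B.map (fun a => (a : ℂ))), r = ‖μ‖} := by
  rcases Nat.eq_zero_or_pos n with h | h
  · subst h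
    have hemp : ∀ μ : ℂ, μ ∉ spectrum ℂ (B.map (fun a => (a : ℂ))) := fun μ hμ =>
      (spectrum.mem_iff.mp hμ) (isUnit_of_subsingleton _)
    convert bddAbove_empty (α := ℝ)
    ext r
    simp only [Set.mem_setOf_eq, Set.mem_empty_iff_false, iff_false, not_exists]
    exact Set.eq_empty_of_forall_notMem fun r ⟨μ, hμ, _⟩ => hemp μ hμ
  · haveI : Nonempty (Fin n) := Fin.pos_iff_nonempty.mp h
    refine ⟨‖B.map (fun a => (a : ℂ))‖, ?_⟩
    rintro r ⟨μ, hμ, rfl⟩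
    exact spectrum.norm_le_norm_of_mem hμ

lemma abs_le_specRad {n : ℕ} {B : Matrix (Fin n) (Fin n) ℝ} {μ : ℂ}
    (hμ : μ ∈ spectrum ℂ (B.map (fun a => (a : ℂ)))) : ‖μ‖ ≤ specRad B :=
  le_csSup (specSet_bddAbove B) ⟨μ, hμ, rfl⟩

lemma specRad_lt {n : ℕ} {C : Matrix (Fin n) (Fin n) ℝ} {β : ℝ} (hβ : 0 < β)
    (h : ∀ μ ∈ spectrum ℂ (C.map (fun a => (a : ℂ))), ‖μ‖ < β) : specRad C < β := by
  set S := {r : ℝ | ∃ μ ∈ spectrum ℂ (C.map (fun a => (a : ℂ))), r = ‖μ‖} with hS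
  have hfin : S.Finite := by
    have : S ⊆ (fun μ => ‖μ‖) '' (spectrum ℂ (C.map (fun a => (a : ℂ)))) := by
      rintro r ⟨μ, hμ, rfl⟩; exact ⟨μ, hμ, rfl⟩
    exact ((Matrix.finite_spectrum _).image _).subset this
  rcases S.eq_empty_or_nonempty with he | hne
  · unfold specRad; rw [← hS, he]; simpa [Real.sSup_empty] using hβ
  · have := hne.csSup_mem hfin
    rcases this with ⟨μ, hμ, heq⟩
    unfold specRad; rw [← hS, heq]; exact h μ hμ


-- eigenvector extraction
lemma exists_eigvec {n : ℕ} {M : Matrix (Fin n) (Fin n) ℂ} {μ : ℂ}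
    (h : μ ∈ spectrum ℂ M) : ∃ u : Fin n → ℂ, u ≠ 0 ∧ M *ᵥ u = μ • u := by
  rw [spectrum.mem_iff] at h
  rw [Matrix.isUnit_iff_isUnit_det, isUnit_iff_ne_zero, ne_eq, not_not] at h
  obtain ⟨u, hu0, hu⟩ := (Matrix.exists_mulVec_eq_zero_iff).mpr h
  refine ⟨u, hu0, ?_⟩
  have : (algebraMap ℂ (Matrix (Fin n) (Fin n) ℂ) μ) *ᵥ u - M *ᵥ u = 0 := by
    rw [← Matrix.sub_mulVec]; exact hu
  have h2 : (algebraMap ℂ (Matrix (Fin n) (Fin n) ℂ) μ) *ᵥ u = μ • u := by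
    have : algebraMap ℂ (Matrix (Fin n) (Fin n) ℂ) μ = μ • (1 : Matrix (Fin n) (Fin n) ℂ) := by
      rw [Algebra.algebraMap_eq_smul_one]
    rw [this, Matrix.smul_mulVec, Matrix.one_mulVec]
  rw [h2] at this
  rw [sub_eq_zero] at this; exact this.symm

lemma nnnorm_cmap {n : ℕ} (M : Matrix (Fin n) (Fin n) ℝ) :
    ‖M.map (fun a => (a : ℂ))‖₊ = ‖M‖₊ := by
  simp [Matrix.linfty_opNNNorm_def, Matrix.map_apply]

lemma entry_norm_le {n : ℕ} (M : Matrix (Fin n) (Fin n) ℝ) (i j : Fin n) :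
    |M i j| ≤ ‖M‖ := by
  have h1 : ‖M i j‖₊ ≤ ∑ k, ‖M i k‖₊ := Finset.single_le_sum (f := fun k => ‖M i k‖₊) (fun k _ => zero_le) (Finset.mem_univ j)
  have h2 : (∑ k, ‖M i k‖₊) ≤ ‖M‖₊ := by
    rw [Matrix.linfty_opNNNorm_def]
    exact Finset.le_sup (f := fun i => ∑ j, ‖M i j‖₊) (Finset.mem_univ i)
  calc |M i j| = ‖M i j‖ := (Real.norm_eq_abs _).symm
    _ ≤ _ := by exact_mod_cast h1.trans h2

lemma exists_pow_norm_lt_one {n : ℕ} (hn : 0 < n) (A : Matrix (Fin n) (Fin n) ℂ)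
    (h : ∀ μ ∈ spectrum ℂ A, ‖μ‖ < 1) : ∃ N, 0 < N ∧ ‖A ^ N‖ < 1 := by
  haveI : Nonempty (Fin n) := Fin.pos_iff_nonempty.mp hn
  have hne : (spectrum ℂ A).Nonempty := spectrum.nonempty A
  have hρ : spectralRadius ℂ A < 1 := by
    have h1 : ∀ k ∈ spectrum ℂ A, ‖k‖₊ < (1 : NNReal) := by
      intro k hk
      have := h k hk
      have h2 : ‖k‖ < 1 := by exact this
      exact_mod_cast h2
    have := spectrum.spectralRadius_lt_of_forall_lt_of_nonempty hne h1
    simpa using this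
  have hG := spectrum.pow_nnnorm_pow_one_div_tendsto_nhds_spectralRadius A
  have hev : ∀ᶠ N : ℕ in atTop, (‖A ^ N‖₊ : ENNReal) ^ (1/(N:ℝ)) < 1 :=
    hG.eventually_lt_const hρ
  obtain ⟨N, hN1, hN⟩ := ((eventually_ge_atTop 1).and hev).exists
  refine ⟨N, hN1, ?_⟩
  by_contra hc
  push_neg at hc
  have h1 : (1 : ENNReal) ≤ (‖A ^ N‖₊ : ENNReal) := by
    have : (1:NNReal) ≤ ‖A ^ N‖₊ := by
      have : (1:ℝ) ≤ ‖A ^ N‖ := hc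
      exact_mod_cast this
    exact_mod_cast this
  have : (1 : ENNReal) ≤ (‖A ^ N‖₊ : ENNReal) ^ (1/(N:ℝ)) := by
    calc (1 : ENNReal) = 1 ^ (1/(N:ℝ)) := (ENNReal.one_rpow _).symm
      _ ≤ _ := ENNReal.rpow_le_rpow h1 (by positivity)
  exact absurd hN (not_lt.mpr this)

lemma mul_entry_nonneg {n : ℕ} {M N : Matrix (Fin n) (Fin n) ℝ}
    (hM : ∀ i j, 0 ≤ M i j) (hN : ∀ i j, 0 ≤ N i j) : ∀ i j, 0 ≤ (M * N) i j := by
  intro i j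
  rw [Matrix.mul_apply]
  exact Finset.sum_nonneg fun k _ => mul_nonneg (hM i k) (hN k j)

lemma pow_entry_nonneg {n : ℕ} {M : Matrix (Fin n) (Fin n) ℝ}
    (hM : ∀ i j, 0 ≤ M i j) : ∀ (k : ℕ) i j, 0 ≤ (M ^ k) i j := by
  intro k
  induction k with
  | zero => intro i j; rw [pow_zero]; by_cases h : i = j <;> simp [Matrix.one_apply, h]
  | succ m ih => rw [pow_succ]; exact mul_entry_nonneg ih hM

lemma mInv {n : ℕ} {B : Matrix (Fin n) (Fin n) ℝ} (hB : ∀ i j, 0 ≤ B i j) {α : ℝ}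
    (hρ : specRad B < α) :
    IsUnit (α • (1 : Matrix (Fin n) (Fin n) ℝ) - B) ∧
    ∀ i j, 0 ≤ (α • (1 : Matrix (Fin n) (Fin n) ℝ) - B)⁻¹ i j := by
  have hα : 0 < α := lt_of_le_of_lt (specRad_nonneg B) hρ
  rcases Nat.eq_zero_or_pos n with hn | hn
  · subst hn
    exact ⟨isUnit_of_subsingleton _, fun i => i.elim0⟩
  set a : Matrix (Fin n) (Fin n) ℝ := α⁻¹ • B with ha
  have ha0 : ∀ i j, 0 ≤ a i j := fun i j => by
    simpa [ha] using mul_nonneg (le_of_lt (inv_pos.mpr hα)) (hB i j)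
  -- complex map of a
  have hmap : a.map (fun x => (x : ℂ)) = ((α⁻¹ : ℝ) : ℂ) • B.map (fun x => (x : ℂ)) := by
    ext i j
    simp [ha, Matrix.map_apply, Complex.ofReal_mul]
  have hspec : ∀ μ ∈ spectrum ℂ (a.map (fun x => (x : ℂ))), ‖μ‖ < 1 := by
    intro μ hμ
    rw [hmap] at hμ
    have hc : ((α⁻¹ : ℝ) : ℂ) ≠ 0 := by
      exact_mod_cast ne_of_gt (inv_pos.mpr hα)
    rw [show ((α⁻¹ : ℝ) : ℂ) • B.map (fun x => (x : ℂ))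
        = (Units.mk0 _ hc : ℂˣ) • B.map (fun x => (x : ℂ)) from rfl,
      spectrum.unit_smul_eq_smul] at hμ
    obtain ⟨ν, hν, hh⟩ := hμ
    have hμν : μ = ((α⁻¹ : ℝ) : ℂ) * ν := by simpa using hh.symm
    have hbound : ‖ν‖ ≤ specRad B := abs_le_specRad hν
    rw [hμν]
    rw [norm_mul]
    have : ‖((α⁻¹ : ℝ) : ℂ)‖ = α⁻¹ := by
      rw [Complex.norm_real, Real.norm_eq_abs, abs_of_pos (inv_pos.mpr hα)]
    rw [this]
    calc α⁻¹ * ‖ν‖ ≤ α⁻¹ * specRad B := by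
          exact mul_le_mul_of_nonneg_left hbound (le_of_lt (inv_pos.mpr hα))
      _ < α⁻¹ * α := by
          exact mul_lt_mul_of_pos_left hρ (inv_pos.mpr hα)
      _ = 1 := inv_mul_cancel₀ (ne_of_gt hα)
  obtain ⟨N, hN0, hnorm⟩ := exists_pow_norm_lt_one hn _ hspec
  -- transfer norm to real side
  have hpowmap : (a.map (fun x => (x : ℂ))) ^ N = (a ^ N).map (fun x => (x : ℂ)) := by
    have := map_pow (Complex.ofRealHom.mapMatrix
      (m := Fin n)) a N
    exact this.symm
  have ht : ‖a ^ N‖ < 1 := by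
    have h1 : ‖(a ^ N).map (fun x => (x : ℂ))‖₊ = ‖a ^ N‖₊ := nnnorm_cmap _
    rw [hpowmap] at hnorm
    calc ‖a ^ N‖ = ((‖a ^ N‖₊ : NNReal) : ℝ) := rfl
      _ = ((‖(a ^ N).map (fun x => (x : ℂ))‖₊ : NNReal) : ℝ) := by rw [h1]
      _ < 1 := hnorm
  set t := a ^ N with htdef
  have ht0 : ∀ i j, 0 ≤ t i j := pow_entry_nonneg ha0 N
  set u : (Matrix (Fin n) (Fin n) ℝ)ˣ := Units.oneSub t ht with hu
  have huval : (u : Matrix (Fin n) (Fin n) ℝ) = 1 - t := rfl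
  set S : Matrix (Fin n) (Fin n) ℝ := ∑ k ∈ Finset.range N, a ^ k with hS
  have hS0 : ∀ i j, 0 ≤ S i j := by
    intro i j
    rw [hS]
    rw [Matrix.sum_apply]
    exact Finset.sum_nonneg fun k _ => pow_entry_nonneg ha0 k i j
  have hgeom1 : (1 - a) * S = 1 - t := by
    have h := mul_geom_sum (x := a) N
    have h2 : (1 - a) * S = -((a - 1) * S) := by rw [← neg_sub a 1, neg_mul]
    rw [h2, hS, h, neg_sub, htdef]
  have hgeom2 : S * (1 - a) = 1 - t := by
    have h := geom_sum_mul (x := a) N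
    have h2 : S * (1 - a) = -(S * (a - 1)) := by rw [← neg_sub a 1, mul_neg]
    rw [h2, hS, h, neg_sub, htdef]
  set v : Matrix (Fin n) (Fin n) ℝ := ((u⁻¹ : (Matrix (Fin n) (Fin n) ℝ)ˣ) : Matrix (Fin n) (Fin n) ℝ) with hv
  -- v = partial geometric sum + remainder
  have hvrec : v = 1 + t * v := by
    have h1 : (1 - t) * v = 1 := by rw [← huval, hv]; exact u.mul_inv
    have h2 : v - t * v = 1 := by rw [← h1, sub_mul, one_mul]
    linear_combination (norm := abel) h2
  have hvq : ∀ q : ℕ, v = (∑ m ∈ Finset.range q, t ^ m) + t ^ q * v := by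
    intro q
    induction q with
    | zero => simp
    | succ m ih =>
      conv_lhs => rw [ih]
      rw [Finset.sum_range_succ]
      have : t ^ m * v = t ^ m * 1 + t ^ m * (t * v) := by
        rw [← mul_add, ← hvrec]
      rw [this]
      have hc : t ^ m * (t * v) = t ^ (m + 1) * v := by rw [← mul_assoc, ← pow_succ]
      rw [hc, mul_one]
      abel
  have hv0 : ∀ i j, 0 ≤ v i j := by
    intro i j
    have hbd : ∀ q : ℕ, 0 < q → -(‖t‖ ^ q * ‖v‖) ≤ v i j := by
      intro q hq
      have := hvq q
      have hentry : v i j = (∑ m ∈ Finset.range q, t ^ m) i j + (t ^ q * v) i j := by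
        conv_lhs => rw [this]
        rw [Matrix.add_apply]
      have h1 : 0 ≤ (∑ m ∈ Finset.range q, t ^ m) i j := by
        rw [Matrix.sum_apply]
        exact Finset.sum_nonneg fun m _ => pow_entry_nonneg ht0 m i j
      have h2 : |(t ^ q * v) i j| ≤ ‖t ^ q * v‖ := entry_norm_le _ i j
      have h3 : ‖t ^ q * v‖ ≤ ‖t‖ ^ q * ‖v‖ := by
        calc ‖t ^ q * v‖ ≤ ‖t ^ q‖ * ‖v‖ := norm_mul_le _ _
          _ ≤ ‖t‖ ^ q * ‖v‖ := by
            exact mul_le_mul_of_nonneg_right (norm_pow_le' t hq) (norm_nonneg v)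
      have h4 : -(‖t‖ ^ q * ‖v‖) ≤ (t ^ q * v) i j := by
        have := (abs_le.mp h2).1
        linarith
      linarith
    have hlim : Tendsto (fun q : ℕ => -(‖t‖ ^ q * ‖v‖)) atTop (nhds 0) := by
      have h0 : Tendsto (fun q : ℕ => ‖t‖ ^ q) atTop (nhds 0) :=
        tendsto_pow_atTop_nhds_zero_of_lt_one (norm_nonneg t) ht
      have := (h0.mul_const ‖v‖).neg
      simpa using this
    exact le_of_tendsto hlim ((eventually_gt_atTop 0).mono hbd)
  -- assemble
  have c0 : Commute a t := (Commute.refl a).pow_right N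
  have c1 : Commute (1 - a) ((u : Matrix (Fin n) (Fin n) ℝ)) := by
    rw [huval]
    exact ((Commute.one_left (1 - t)).sub_left
      (((Commute.one_right a).sub_right c0)))
  have c2 : Commute (1 - a) v := by
    rw [hv]
    exact c1.units_inv_right
  set R : Matrix (Fin n) (Fin n) ℝ := S * v with hR
  have hR0 : ∀ i j, 0 ≤ R i j := mul_entry_nonneg hS0 hv0
  have hone1 : (1 - a) * R = 1 := by
    rw [hR, ← mul_assoc, hgeom1, ← huval, hv]
    exact u.mul_inv
  have hone2 : R * (1 - a) = 1 := by
    rw [hR, mul_assoc, ← c2.eq, ← mul_assoc, hgeom2, ← huval, hv]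
    exact u.mul_inv
  have hMa : α • ((1 : Matrix (Fin n) (Fin n) ℝ) - a) = α • 1 - B := by
    rw [smul_sub, ha, smul_smul, mul_inv_cancel₀ (ne_of_gt hα), one_smul]
  set X : Matrix (Fin n) (Fin n) ℝ := α⁻¹ • R with hX
  have hMX : (α • (1 : Matrix (Fin n) (Fin n) ℝ) - B) * X = 1 := by
    rw [← hMa, hX, smul_mul_assoc, mul_smul_comm, smul_smul, mul_inv_cancel₀ (ne_of_gt hα),
      one_smul, hone1]
  have hXM : X * (α • (1 : Matrix (Fin n) (Fin n) ℝ) - B) = 1 := by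
    rw [← hMa, hX, smul_mul_assoc, mul_smul_comm, smul_smul, inv_mul_cancel₀ (ne_of_gt hα),
      one_smul, hone2]
  refine ⟨⟨⟨_, X, hMX, hXM⟩, rfl⟩, ?_⟩
  intro i j
  rw [Matrix.inv_eq_right_inv hMX, hX, Matrix.smul_apply, smul_eq_mul]
  exact mul_nonneg (le_of_lt (inv_pos.mpr hα)) (hR0 i j)

lemma subinv {n : ℕ} {B : Matrix (Fin n) (Fin n) ℝ} (hB : ∀ i j, 0 ≤ B i j) {α : ℝ}
    (hρ : specRad B < α) {w : Fin n → ℝ} (hw : ∀ i, 0 ≤ w i)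
    (hBw : ∀ i, α * w i ≤ (B *ᵥ w) i) : w = 0 := by
  obtain ⟨hunit, hinv⟩ := mInv hB hρ
  set M := α • (1 : Matrix (Fin n) (Fin n) ℝ) - B with hM
  have hMw : ∀ i, (M *ᵥ w) i ≤ 0 := by
    intro i
    have h1 : (M *ᵥ w) i = α * w i - (B *ᵥ w) i := by
      rw [hM, Matrix.sub_mulVec, Matrix.smul_mulVec, Matrix.one_mulVec]
      simp [Pi.smul_apply, smul_eq_mul]
    rw [h1]
    linarith [hBw i]
  have hdet : IsUnit M.det := (Matrix.isUnit_iff_isUnit_det M).mp hunit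
  have hw' : w = M⁻¹ *ᵥ (M *ᵥ w) := by
    rw [Matrix.mulVec_mulVec, Matrix.nonsing_inv_mul M hdet, Matrix.one_mulVec]
  funext i
  have h2 : w i ≤ 0 := by
    rw [hw']
    rw [Matrix.mulVec]
    apply Finset.sum_nonpos
    intro k _
    exact mul_nonpos_of_nonneg_of_nonpos (hinv i k) (hMw k)
  exact le_antisymm h2 (hw i)


lemma key_ineq {n : ℕ} {C : Matrix (Fin n) (Fin n) ℝ} {c : Fin n → ℝ}
    (hC : ∀ i j, 0 ≤ C i j) (hc : ∀ i, 0 ≤ c i) {μ : ℂ}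
    (hμ : μ ∈ spectrum ℂ ((Matrix.of (fun i j => (if i = j then c i else 0) + C i j)).map
      (fun a => (a : ℂ)))) :
    ∃ z : Fin n → ℝ, (∀ i, 0 ≤ z i) ∧ z ≠ 0 ∧
      ∀ i, (‖μ‖ - c i) * z i ≤ ∑ j, C i j * z j := by
  obtain ⟨u, hu0, hu⟩ := exists_eigvec hμ
  refine ⟨fun i => ‖u i‖, fun i => norm_nonneg _, ?_, ?_⟩
  · intro hz
    apply hu0
    funext i
    have := congrFun hz i
    simp only [Pi.zero_apply] at this ⊢
    exact norm_eq_zero.mp this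
  · intro i
    have heq : ∑ j, ((C i j : ℝ) : ℂ) * u j = (μ - (c i : ℂ)) * u i := by
      have h1 := congrFun hu i
      rw [Matrix.mulVec, dotProduct] at h1
      simp only [Matrix.map_apply, Matrix.of_apply, Pi.smul_apply, smul_eq_mul] at h1
      have h2 : ∑ j, (((if i = j then c i else 0) + C i j : ℝ) : ℂ) * u j
          = (c i : ℂ) * u i + ∑ j, ((C i j : ℝ) : ℂ) * u j := by
        have : ∀ j, (((if i = j then c i else 0) + C i j : ℝ) : ℂ) * u j
            = (if i = j then (c i : ℂ) * u j else 0) + ((C i j : ℝ) : ℂ) * u j := by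
          intro j
          by_cases h : i = j <;> simp [h, Complex.ofReal_add, add_mul]
        rw [Finset.sum_congr rfl (fun j _ => this j), Finset.sum_add_distrib,
          Finset.sum_ite_eq Finset.univ i (fun j => (c i : ℂ) * u j)]
        simp
      rw [h2] at h1
      have := sub_eq_of_eq_add' h1.symm
      rw [← this, sub_mul]
    -- now take absolute values
    have habs : ‖μ - (c i : ℂ)‖ * ‖u i‖
        ≤ ∑ j, C i j * ‖u j‖ := by
      rw [← norm_mul, ← heq]
      calc ‖∑ j, ((C i j : ℝ) : ℂ) * u j‖
          ≤ ∑ j, ‖((C i j : ℝ) : ℂ) * u j‖ := by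
            exact norm_sum_le _ _
        _ = ∑ j, C i j * ‖u j‖ := by
            apply Finset.sum_congr rfl
            intro j _
            rw [norm_mul, Complex.norm_real, Real.norm_eq_abs, abs_of_nonneg (hC i j)]
    have htri : ‖μ‖ - c i ≤ ‖μ - (c i : ℂ)‖ := by
      have := norm_sub_norm_le μ ((c i : ℝ) : ℂ)
      rw [Complex.norm_real, Real.norm_eq_abs, abs_of_nonneg (hc i)] at this
      exact this
    calc (‖μ‖ - c i) * ‖u i‖
        ≤ ‖μ - (c i : ℂ)‖ * ‖u i‖ := by
          exact mul_le_mul_of_nonneg_right htri (norm_nonneg _)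
      _ ≤ _ := habs


lemma mmat_props {n : ℕ} {M : Matrix (Fin n) (Fin n) ℝ} (h : IsMmat M) :
    IsUnit M ∧ ∀ i j, 0 ≤ M⁻¹ i j := by
  obtain ⟨α, B, hB, hρ, rfl⟩ := h
  exact mInv hB hρ

end Aux

/-- If `T` is an M-matrix and `P` is diagonal with `O ≤ P ≤ I`, then
`I − P + T·P` and `I − P + P·T` are M-matrices; in particular they are invertible and
their inverses are entrywise nonnegative. -/
theorem stmt3 {n : ℕ} (T : Matrix (Fin n) (Fin n) ℝ) (hT : IsMmat T)
    (p : Fin n → ℝ) (hp : ∀ i, 0 ≤ p i ∧ p i ≤ 1) (P : Matrix (Fin n) (Fin n) ℝ)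
    (hP : P = Matrix.diagonal p) :
    IsMmat (1 - P + T * P) ∧ IsMmat (1 - P + P * T) ∧
    IsUnit (1 - P + T * P) ∧ IsUnit (1 - P + P * T) ∧
    (∀ i j, 0 ≤ (1 - P + T * P)⁻¹ i j) ∧ (∀ i j, 0 ≤ (1 - P + P * T)⁻¹ i j) := by
  obtain ⟨α, B, hB, hρ, hTeq⟩ := hT
  subst hP
  subst hTeq
  have hα : 0 < α := lt_of_le_of_lt (specRad_nonneg B) hρ
  set d : Fin n → ℝ := fun i => 1 - p i + α * p i with hd
  have hd0 : ∀ i, 0 < d i := by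
    intro i; rcases hp i with ⟨h0, h1⟩
    simp only [hd]
    rcases eq_or_lt_of_le h1 with h2 | h2
    · rw [h2]; linarith
    · nlinarith
  have hdβ : ∀ i, d i ≤ α + 1 := by
    intro i; rcases hp i with ⟨h0, h1⟩
    simp only [hd]; nlinarith
  set c : Fin n → ℝ := fun i => (α + 1) - d i with hc
  have hc0 : ∀ i, 0 ≤ c i := fun i => by simp only [hc]; linarith [hdβ i]
  -- entry formulas
  have hM1 : ∀ i j, ((1 : Matrix (Fin n) (Fin n) ℝ) - Matrix.diagonal p
      + (α • (1 : Matrix (Fin n) (Fin n) ℝ) - B) * Matrix.diagonal p) i j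
      = (if i = j then d i else 0) - B i j * p j := by
    intro i j
    rw [Matrix.add_apply, Matrix.sub_apply, Matrix.mul_diagonal, Matrix.sub_apply,
      Matrix.smul_apply, Matrix.one_apply, Matrix.diagonal_apply, smul_eq_mul]
    by_cases h : i = j
    · subst h; simp [hd]; ring
    · simp [h]
  have hM2 : ∀ i j, ((1 : Matrix (Fin n) (Fin n) ℝ) - Matrix.diagonal p
      + Matrix.diagonal p * (α • (1 : Matrix (Fin n) (Fin n) ℝ) - B)) i j
      = (if i = j then d i else 0) - p i * B i j := by
    intro i j
    rw [Matrix.add_apply, Matrix.sub_apply, Matrix.diagonal_mul, Matrix.sub_apply,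
      Matrix.smul_apply, Matrix.one_apply, Matrix.diagonal_apply, smul_eq_mul]
    by_cases h : i = j
    · subst h; simp [hd]; ring
    · simp [h]
  -- the two candidate nonnegative matrices
  set C1 : Matrix (Fin n) (Fin n) ℝ := Matrix.of (fun i j => B i j * p j) with hC1
  set C2 : Matrix (Fin n) (Fin n) ℝ := Matrix.of (fun i j => p i * B i j) with hC2
  have hC1n : ∀ i j, 0 ≤ C1 i j := fun i j => mul_nonneg (hB i j) (hp j).1
  have hC2n : ∀ i j, 0 ≤ C2 i j := fun i j => mul_nonneg (hp i).1 (hB i j)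
  set B1 : Matrix (Fin n) (Fin n) ℝ :=
    Matrix.of (fun i j => (if i = j then c i else 0) + C1 i j) with hB1
  set B2 : Matrix (Fin n) (Fin n) ℝ :=
    Matrix.of (fun i j => (if i = j then c i else 0) + C2 i j) with hB2
  have hB1n : ∀ i j, 0 ≤ B1 i j := by
    intro i j
    simp only [hB1, Matrix.of_apply]
    refine add_nonneg ?_ (hC1n i j)
    split_ifs with h
    · exact hc0 i
    · exact le_refl 0
  have hB2n : ∀ i j, 0 ≤ B2 i j := by
    intro i j
    simp only [hB2, Matrix.of_apply]
    refine add_nonneg ?_ (hC2n i j)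
    split_ifs with h
    · exact hc0 i
    · exact le_refl 0
  -- decompositions
  have hdecomp1 : (1 : Matrix (Fin n) (Fin n) ℝ) - Matrix.diagonal p
      + (α • (1 : Matrix (Fin n) (Fin n) ℝ) - B) * Matrix.diagonal p
      = (α + 1) • (1 : Matrix (Fin n) (Fin n) ℝ) - B1 := by
    ext i j
    rw [hM1 i j, Matrix.sub_apply, Matrix.smul_apply, Matrix.one_apply, smul_eq_mul]
    simp only [hB1, Matrix.of_apply, hC1, hc]
    by_cases h : i = j
    · subst h; simp; ring
    · simp [h]
  have hdecomp2 : (1 : Matrix (Fin n) (Fin n) ℝ) - Matrix.diagonal p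
      + Matrix.diagonal p * (α • (1 : Matrix (Fin n) (Fin n) ℝ) - B)
      = (α + 1) • (1 : Matrix (Fin n) (Fin n) ℝ) - B2 := by
    ext i j
    rw [hM2 i j, Matrix.sub_apply, Matrix.smul_apply, Matrix.one_apply, smul_eq_mul]
    simp only [hB2, Matrix.of_apply, hC2, hc]
    by_cases h : i = j
    · subst h; simp; ring
    · simp [h]
  -- spectral radius bounds
  have hspec1 : specRad B1 < α + 1 := by
    apply specRad_lt (by linarith)
    intro μ hμ
    by_contra hcon
    push_neg at hcon
    obtain ⟨z, hz0, hzne, hzkey⟩ := key_ineq hC1n hc0 hμ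
    set w : Fin n → ℝ := fun j => p j * z j with hw
    have hwn : ∀ i, 0 ≤ w i := fun i => mul_nonneg (hp i).1 (hz0 i)
    have hdz : ∀ i, d i * z i ≤ ∑ j, B i j * w j := by
      intro i
      have h1 := hzkey i
      have h2 : d i ≤ ‖μ‖ - c i := by simp only [hc]; linarith
      calc d i * z i ≤ (‖μ‖ - c i) * z i :=
            mul_le_mul_of_nonneg_right h2 (hz0 i)
        _ ≤ ∑ j, C1 i j * z j := h1
        _ = ∑ j, B i j * w j := by
            apply Finset.sum_congr rfl
            intro j _
            simp only [hC1, Matrix.of_apply, hw]; ring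
    have hBw : ∀ i, α * w i ≤ (B *ᵥ w) i := by
      intro i
      have h1 : α * w i ≤ d i * z i := by
        simp only [hw, hd]
        rcases hp i with ⟨h0, h1⟩
        nlinarith [hz0 i]
      have h2 : (B *ᵥ w) i = ∑ j, B i j * w j := by
        rw [Matrix.mulVec, dotProduct]
      rw [h2]
      exact le_trans h1 (hdz i)
    have hwz := subinv hB hρ hwn hBw
    apply hzne
    funext i
    have h3 : ∑ j, B i j * w j = 0 := by
      rw [hwz]; simp
    have h4 := (hdz i).trans (le_of_eq h3)
    have := hd0 i
    have h5 : z i ≤ 0 := by nlinarith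
    exact le_antisymm h5 (hz0 i)
  have hspec2 : specRad B2 < α + 1 := by
    apply specRad_lt (by linarith)
    intro μ hμ
    by_contra hcon
    push_neg at hcon
    obtain ⟨z, hz0, hzne, hzkey⟩ := key_ineq hC2n hc0 hμ
    have hdz : ∀ i, d i * z i ≤ p i * ∑ j, B i j * z j := by
      intro i
      have h1 := hzkey i
      have h2 : d i ≤ ‖μ‖ - c i := by simp only [hc]; linarith
      calc d i * z i ≤ (‖μ‖ - c i) * z i :=
            mul_le_mul_of_nonneg_right h2 (hz0 i)
        _ ≤ ∑ j, C2 i j * z j := h1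
        _ = p i * ∑ j, B i j * z j := by
            rw [Finset.mul_sum]
            apply Finset.sum_congr rfl
            intro j _
            simp only [hC2, Matrix.of_apply]; ring
    have hBz : ∀ i, α * z i ≤ (B *ᵥ z) i := by
      intro i
      have hsum : (B *ᵥ z) i = ∑ j, B i j * z j := by
        rw [Matrix.mulVec, dotProduct]
      have hsumn : 0 ≤ ∑ j, B i j * z j :=
        Finset.sum_nonneg fun j _ => mul_nonneg (hB i j) (hz0 j)
      rcases eq_or_lt_of_le (hp i).1 with hpi | hpi
      · -- p i = 0
        have hzi : z i = 0 := by
          have h6 := hdz i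
          rw [← hpi] at h6
          simp at h6
          have := hd0 i
          nlinarith [hz0 i]
        rw [hsum, hzi]
        simpa using hsumn
      · -- 0 < p i
        have h1 : α * (p i * z i) ≤ d i * z i := by
          simp only [hd]
          rcases hp i with ⟨h0, h1⟩
          nlinarith [hz0 i]
        have h2 := le_trans h1 (hdz i)
        rw [hsum]
        have h3 : p i * (α * z i) ≤ p i * ∑ j, B i j * z j := by
          calc p i * (α * z i) = α * (p i * z i) := by ring
            _ ≤ _ := h2
        exact le_of_mul_le_mul_left h3 hpi
    have hzz := subinv hB hρ hz0 hBz
    exact hzne hzz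
  -- conclude
  have hmm1 : IsMmat ((1 : Matrix (Fin n) (Fin n) ℝ) - Matrix.diagonal p
      + (α • (1 : Matrix (Fin n) (Fin n) ℝ) - B) * Matrix.diagonal p) :=
    ⟨α + 1, B1, hB1n, hspec1, hdecomp1⟩
  have hmm2 : IsMmat ((1 : Matrix (Fin n) (Fin n) ℝ) - Matrix.diagonal p
      + Matrix.diagonal p * (α • (1 : Matrix (Fin n) (Fin n) ℝ) - B)) :=
    ⟨α + 1, B2, hB2n, hspec2, hdecomp2⟩
  obtain ⟨hu1, hi1⟩ := mmat_props hmm1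
  obtain ⟨hu2, hi2⟩ := mmat_props hmm2
  exact ⟨hmm1, hmm2, hu1, hu2, hi1, hi2⟩
end

section
/- Let T be an irreducible n×n real matrix satisfying condition T2: null(Tᵀ) = span(v) and null(T) = span(w) with v > 0 and w > 0 componentwise, and T + D is an M-matrix for every diagonal matrix D with D ≥ O and D ≠ O. Then for any diagonal matrix P with O ≤ P ≤ I entrywise and P ≠ I, both matrices I − P + T·P and I − P + P·T are M-matrices; in particular (I − P + T·P)⁻¹ ≥ O and (I − P + P·T)⁻¹ ≥ O entrywise. -/
open Matrix

namespace Stmt4Aux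

variable {n : ℕ}

lemma pow_entry_nonneg {C : Matrix (Fin n) (Fin n) ℝ} (hC : ∀ i j, 0 ≤ C i j) :
    ∀ (k : ℕ) (i j : Fin n), 0 ≤ (C ^ k) i j := by
  intro k
  induction k with
  | zero =>
      intro i j
      rw [pow_zero]
      by_cases h : i = j <;> simp [Matrix.one_apply, h]
  | succ k ih =>
      intro i j
      rw [pow_succ, Matrix.mul_apply]
      exact Finset.sum_nonneg fun l _ => mul_nonneg (ih i l) (hC l j)

/-- Weighted row-sum bound for complex eigenvalues of an entrywise nonnegative matrix. -/
lemma spec_bound {B : Matrix (Fin n) (Fin n) ℝ} {u : Fin n → ℝ}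
    (hB : ∀ i j, 0 ≤ B i j) (hu : ∀ i, 0 < u i) {μ : ℂ}
    (hμ : μ ∈ spectrum ℂ (B.map (fun a => (a : ℂ)))) :
    ∃ k, ‖μ‖ * u k ≤ B.mulVec u k := by
  classical
  rw [spectrum.mem_iff] at hμ
  set M := B.map (fun a => (a : ℂ)) with hM
  have hdet : (algebraMap ℂ (Matrix (Fin n) (Fin n) ℂ) μ - M).det = 0 := by
    by_contra h
    exact hμ ((Matrix.isUnit_iff_isUnit_det _).mpr (isUnit_iff_ne_zero.mpr h))
  obtain ⟨x, hx0, hx⟩ := (Matrix.exists_mulVec_eq_zero_iff).mpr hdet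
  have hMx : M.mulVec x = μ • x := by
    have h1 : (algebraMap ℂ (Matrix (Fin n) (Fin n) ℂ) μ - M).mulVec x =
        μ • x - M.mulVec x := by
      rw [Matrix.sub_mulVec, Algebra.algebraMap_eq_smul_one, Matrix.smul_mulVec,
        Matrix.one_mulVec]
    rw [h1] at hx
    exact (sub_eq_zero.mp hx).symm
  obtain ⟨i₀, hi₀⟩ := Function.ne_iff.mp hx0
  have hxi₀ : x i₀ ≠ 0 := by simpa using hi₀
  obtain ⟨k, -, hk⟩ := Finset.exists_max_image (Finset.univ : Finset (Fin n))
    (fun i => ‖x i‖ / u i) ⟨i₀, Finset.mem_univ _⟩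
  have hk' : ∀ j, ‖x j‖ / u j ≤ ‖x k‖ / u k :=
    fun j => hk j (Finset.mem_univ j)
  have hxk : 0 < ‖x k‖ := by
    have h1 : 0 < ‖x i₀‖ / u i₀ :=
      div_pos (norm_pos_iff.mpr hxi₀) (hu i₀)
    have h2 := lt_of_lt_of_le h1 (hk' i₀)
    rcases div_pos_iff.mp h2 with ⟨h3, -⟩ | ⟨h3, -⟩
    · exact h3
    · exact absurd h3 (not_lt.mpr (norm_nonneg _))
  refine ⟨k, ?_⟩
  have hxj : ∀ j, ‖x j‖ ≤ ‖x k‖ / u k * u j := by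
    intro j
    have := hk' j
    rw [div_le_div_iff₀ (hu j) (hu k)] at this
    rw [div_mul_eq_mul_div, le_div_iff₀ (hu k)]
    linarith
  have key : ‖μ‖ * ‖x k‖ ≤
      B.mulVec u k * (‖x k‖ / u k) := by
    calc ‖μ‖ * ‖x k‖ = ‖μ * x k‖ :=
        (norm_mul μ (x k)).symm
      _ = ‖M.mulVec x k‖ := by rw [hMx]; simp
      _ ≤ ∑ j, ‖M k j * x j‖ := by
          rw [Matrix.mulVec, dotProduct]
          exact norm_sum_le _ _
      _ = ∑ j, B k j * ‖x j‖ := by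
          apply Finset.sum_congr rfl
          intro j _
          rw [norm_mul]
          congr 1
          rw [hM, Matrix.map_apply, Complex.norm_real, Real.norm_eq_abs, abs_of_nonneg (hB k j)]
      _ ≤ ∑ j, B k j * (‖x k‖ / u k * u j) := by
          apply Finset.sum_le_sum
          intro j _
          exact mul_le_mul_of_nonneg_left (hxj j) (hB k j)
      _ = B.mulVec u k * (‖x k‖ / u k) := by
          rw [Matrix.mulVec, dotProduct, Finset.sum_mul]
          apply Finset.sum_congr rfl
          intro j _
          ring
  have h2 : ‖μ‖ ≤ B.mulVec u k / u k := by
    have hkey' : ‖μ‖ * ‖x k‖ ≤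
        (B.mulVec u k / u k) * ‖x k‖ := by
      calc ‖μ‖ * ‖x k‖
          ≤ B.mulVec u k * (‖x k‖ / u k) := key
        _ = (B.mulVec u k / u k) * ‖x k‖ := by ring
    exact le_of_mul_le_mul_right hkey' hxk
  rw [le_div_iff₀ (hu k)] at h2
  exact h2

attribute [local instance] Matrix.linftyOpNormedAddCommGroup Matrix.linftyOpNormedRing
  Matrix.linftyOpNormedSpace Matrix.linftyOpNormedAlgebra

/-- Master lemma: a Z-matrix admitting a positive vector with strictly positive image is a
nonsingular M-matrix with entrywise nonnegative inverse. -/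
lemma master (A : Matrix (Fin n) (Fin n) ℝ)
    (hZ : ∀ i j, i ≠ j → A i j ≤ 0) (u : Fin n → ℝ) (hu : ∀ i, 0 < u i)
    (hAu : ∀ i, 0 < A.mulVec u i) :
    IsMmat A ∧ IsUnit A ∧ ∀ i j, 0 ≤ A⁻¹ i j := by
  classical
  rcases Nat.eq_zero_or_pos n with rfl | hn
  · haveI : Subsingleton (Matrix (Fin 0) (Fin 0) ℂ) :=
      ⟨fun a b => Matrix.ext fun i => i.elim0⟩
    have hA1 : A = 1 := Matrix.ext fun i => i.elim0
    refine ⟨⟨1, 0, fun i => i.elim0, ?_, Matrix.ext fun i => i.elim0⟩,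
      hA1 ▸ isUnit_one, fun i => i.elim0⟩
    have hempty : {r : ℝ | ∃ μ ∈ spectrum ℂ ((0 : Matrix (Fin 0) (Fin 0) ℝ).map
        (fun a => (a : ℂ))), r = ‖μ‖} = ∅ := by
      ext r
      simp only [Set.mem_setOf_eq, Set.mem_empty_iff_false, iff_false, not_exists]
      rintro μ ⟨hμ, -⟩
      exact absurd (isUnit_of_subsingleton _) (spectrum.mem_iff.mp hμ)
    rw [specRad, hempty, Real.sSup_empty]
    norm_num
  have hne : (Finset.univ : Finset (Fin n)).Nonempty := ⟨⟨0, hn⟩, Finset.mem_univ _⟩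
  set α : ℝ := 1 + Finset.univ.sup' hne (fun i => |A i i|) with hα
  have hαA : ∀ i, A i i < α := by
    intro i
    have h1 : |A i i| ≤ Finset.univ.sup' hne (fun i => |A i i|) :=
      Finset.le_sup' (fun i => |A i i|) (Finset.mem_univ i)
    have := le_abs_self (A i i)
    rw [hα]; linarith
  have hα0 : 0 < α := by
    have h1 : |A ⟨0, hn⟩ ⟨0, hn⟩| ≤ Finset.univ.sup' hne (fun i => |A i i|) :=
      Finset.le_sup' (fun i => |A i i|) (Finset.mem_univ _)
    have := abs_nonneg (A ⟨0, hn⟩ ⟨0, hn⟩)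
    rw [hα]; linarith
  clear_value α
  set B : Matrix (Fin n) (Fin n) ℝ := α • (1 : Matrix (Fin n) (Fin n) ℝ) - A with hB
  have hBnn : ∀ i j, 0 ≤ B i j := by
    intro i j
    rw [hB]
    by_cases h : i = j
    · subst h
      simp only [Matrix.sub_apply, Matrix.smul_apply, Matrix.one_apply_eq, smul_eq_mul, mul_one]
      linarith [hαA i]
    · simp only [Matrix.sub_apply, Matrix.smul_apply, Matrix.one_apply_ne h, smul_eq_mul,
        mul_zero, zero_sub]
      linarith [hZ i j h]
  have hAeq : A = α • (1 : Matrix (Fin n) (Fin n) ℝ) - B := by rw [hB]; abel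
  have hBu : ∀ i, B.mulVec u i = α * u i - A.mulVec u i := by
    intro i
    rw [hB, Matrix.sub_mulVec, Matrix.smul_mulVec, Matrix.one_mulVec]
    simp
  have hBuα : ∀ i, B.mulVec u i < α * u i := by
    intro i
    rw [hBu i]
    linarith [hAu i]
  have hBunn : ∀ i, 0 ≤ B.mulVec u i := by
    intro i
    rw [Matrix.mulVec, dotProduct]
    exact Finset.sum_nonneg fun j _ => mul_nonneg (hBnn i j) (le_of_lt (hu j))
  -- spectral radius bound
  set β : ℝ := Finset.univ.sup' hne (fun i => B.mulVec u i / u i) with hβ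
  have hβ0 : 0 ≤ β := by
    have h1 : B.mulVec u ⟨0, hn⟩ / u ⟨0, hn⟩ ≤ β :=
      Finset.le_sup' (fun i => B.mulVec u i / u i) (Finset.mem_univ _)
    have := div_nonneg (hBunn ⟨0, hn⟩) (le_of_lt (hu ⟨0, hn⟩))
    linarith
  have hβα : β < α := by
    rw [hβ, Finset.sup'_lt_iff]
    intro i _
    rw [div_lt_iff₀ (hu i)]
    calc B.mulVec u i < α * u i := hBuα i
      _ = α * u i := rfl
  have hspec : specRad B < α := by
    apply lt_of_le_of_lt _ hβα
    apply Real.sSup_le _ hβ0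
    rintro r ⟨μ, hμ, rfl⟩
    obtain ⟨k, hk⟩ := spec_bound hBnn hu hμ
    have h1 : ‖μ‖ ≤ B.mulVec u k / u k := by
      rw [le_div_iff₀ (hu k)]; exact hk
    exact le_trans h1 (Finset.le_sup' (fun i => B.mulVec u i / u i) (Finset.mem_univ k))
  have hMmat : IsMmat A := ⟨α, B, hBnn, hspec, hAeq⟩
  -- nonsingularity
  have hdet : A.det ≠ 0 := by
    intro h
    have hdetC : (A.map (fun a => (a : ℂ))).det = 0 := by
      have := RingHom.map_det Complex.ofRealHom A
      rw [h] at this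
      have h' : (A.map ⇑Complex.ofRealHom).det = 0 := by simpa using this.symm
      exact h'
    have hmem : (α : ℂ) ∈ spectrum ℂ (B.map (fun a => (a : ℂ))) := by
      rw [spectrum.mem_iff]
      intro hunit
      rw [Matrix.isUnit_iff_isUnit_det] at hunit
      have heq : algebraMap ℂ (Matrix (Fin n) (Fin n) ℂ) (α : ℂ) -
          B.map (fun a => (a : ℂ)) = A.map (fun a => (a : ℂ)) := by
        ext i j
        rw [Matrix.sub_apply, Matrix.algebraMap_matrix_apply]
        by_cases hij : i = j
        · subst hij
          simp only [if_pos rfl, Matrix.map_apply, hB, Matrix.sub_apply, Matrix.smul_apply,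
            Matrix.one_apply_eq, smul_eq_mul, mul_one, Algebra.algebraMap_self, RingHom.id_apply]
          push_cast
          ring
        · simp only [if_neg hij, Matrix.map_apply, hB, Matrix.sub_apply, Matrix.smul_apply,
            Matrix.one_apply_ne hij, smul_eq_mul, mul_zero, zero_sub]
          push_cast
          ring
      rw [heq, hdetC] at hunit
      exact (not_isUnit_zero : ¬IsUnit (0 : ℂ)) hunit
    obtain ⟨k, hk⟩ := spec_bound hBnn hu hmem
    rw [Complex.norm_real, Real.norm_eq_abs, abs_of_pos hα0] at hk
    linarith [hBuα k]
  have hUnit : IsUnit A := (Matrix.isUnit_iff_isUnit_det A).mpr (isUnit_iff_ne_zero.mpr hdet)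
  -- inverse nonnegativity via Neumann series
  haveI : CompleteSpace (Matrix (Fin n) (Fin n) ℝ) := FiniteDimensional.complete ℝ _
  set C : Matrix (Fin n) (Fin n) ℝ := Matrix.of (fun i j => B i j * u j / (α * u i)) with hC
  have hCnn : ∀ i j, 0 ≤ C i j := by
    intro i j
    rw [hC]
    exact div_nonneg (mul_nonneg (hBnn i j) (le_of_lt (hu j)))
      (le_of_lt (mul_pos hα0 (hu i)))
  have hrow : ∀ i, ∑ j, C i j = B.mulVec u i / (α * u i) := by
    intro i
    rw [Matrix.mulVec, dotProduct, Finset.sum_div]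
    exact Finset.sum_congr rfl fun j _ => rfl
  have hC1 : ‖C‖ < 1 := by
    rw [Matrix.linfty_opNorm_def]
    have hsup : (Finset.univ.sup fun i => ∑ j, ‖C i j‖₊) < 1 := by
      rw [Finset.sup_lt_iff (show (⊥ : NNReal) < 1 by norm_num)]
      intro i _
      have hcoe : ((∑ j, ‖C i j‖₊ : NNReal) : ℝ) = ∑ j, C i j := by
        push_cast
        exact Finset.sum_congr rfl fun j _ => Real.norm_of_nonneg (hCnn i j)
      rw [← NNReal.coe_lt_coe, hcoe, NNReal.coe_one, hrow i, div_lt_one (mul_pos hα0 (hu i))]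
      exact hBuα i
    exact_mod_cast hsup
  have hsummable : Summable (fun k : ℕ => C ^ k) := summable_geometric_of_norm_lt_one hC1
  set N : Matrix (Fin n) (Fin n) ℝ := ∑' k : ℕ, C ^ k with hN
  have hgeom : (1 - C) * N = 1 := mul_neg_geom_series C hC1
  have hNnn : ∀ i j, 0 ≤ N i j := by
    intro i j
    let E : Matrix (Fin n) (Fin n) ℝ →ₗ[ℝ] ℝ :=
      { toFun := fun M => M i j, map_add' := fun _ _ => rfl, map_smul' := fun _ _ => rfl }
    let E' : Matrix (Fin n) (Fin n) ℝ →L[ℝ] ℝ := LinearMap.toContinuousLinearMap E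
    have h1 : N i j = ∑' k : ℕ, (C ^ k) i j := by
      have := E'.map_tsum hsummable
      exact this
    rw [h1]
    exact tsum_nonneg fun k => pow_entry_nonneg hCnn k i j
  set D : Matrix (Fin n) (Fin n) ℝ := Matrix.diagonal u with hD
  set D' : Matrix (Fin n) (Fin n) ℝ := Matrix.diagonal (fun i => (u i)⁻¹) with hD'
  have hDD' : D * D' = 1 := by
    rw [hD, hD', Matrix.diagonal_mul_diagonal]
    have : (fun i => u i * (u i)⁻¹) = fun _ => (1 : ℝ) :=
      funext fun i => mul_inv_cancel₀ (ne_of_gt (hu i))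
    rw [this, Matrix.diagonal_one]
  have hD'D : D' * D = 1 := by
    rw [hD, hD', Matrix.diagonal_mul_diagonal]
    have : (fun i => (u i)⁻¹ * u i) = fun _ => (1 : ℝ) :=
      funext fun i => inv_mul_cancel₀ (ne_of_gt (hu i))
    rw [this, Matrix.diagonal_one]
  have hAfact : A = α • (D * (1 - C) * D') := by
    ext i j
    rw [Matrix.smul_apply, Matrix.mul_diagonal, Matrix.diagonal_mul, smul_eq_mul]
    have hCval : C i j = B i j * u j / (α * u i) := rfl
    have hBij : B i j = α * (1 : Matrix (Fin n) (Fin n) ℝ) i j - A i j := by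
      rw [hB, Matrix.sub_apply, Matrix.smul_apply, smul_eq_mul]
    have hune : u i ≠ 0 := ne_of_gt (hu i)
    have hune' : u j ≠ 0 := ne_of_gt (hu j)
    have hαne : α ≠ 0 := ne_of_gt hα0
    rw [Matrix.sub_apply, hCval, hBij]
    by_cases hij : i = j
    · subst hij
      rw [Matrix.one_apply_eq]
      field_simp
      ring
    · rw [Matrix.one_apply_ne hij]
      field_simp
      ring
  set M' : Matrix (Fin n) (Fin n) ℝ := α⁻¹ • (D * N * D') with hM'
  have hAM : A * M' = 1 := by
    rw [hAfact, hM', Matrix.smul_mul, Matrix.mul_smul, smul_smul,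
      mul_inv_cancel₀ (ne_of_gt hα0), one_smul]
    calc (D * (1 - C) * D') * (D * N * D')
        = D * ((1 - C) * (D' * (D * (N * D')))) := by simp only [Matrix.mul_assoc]
      _ = D * ((1 - C) * (N * D')) := by
          rw [← Matrix.mul_assoc D' D (N * D'), hD'D, Matrix.one_mul]
      _ = D * (((1 - C) * N) * D') := by rw [Matrix.mul_assoc]
      _ = D * D' := by rw [hgeom, Matrix.one_mul]
      _ = 1 := hDD'
  have hAinv : A⁻¹ = M' := Matrix.inv_eq_right_inv hAM
  refine ⟨hMmat, hUnit, ?_⟩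
  intro i j
  rw [hAinv, hM', Matrix.smul_apply]
  have h1 : (D * N * D') i j = u i * N i j * (u j)⁻¹ := by
    rw [Matrix.mul_diagonal, Matrix.diagonal_mul]
  rw [h1, smul_eq_mul]
  have h2 : 0 ≤ u i * N i j * (u j)⁻¹ :=
    mul_nonneg (mul_nonneg (le_of_lt (hu i)) (hNnn i j)) (inv_nonneg.mpr (le_of_lt (hu j)))
  exact mul_nonneg (inv_nonneg.mpr (le_of_lt hα0)) h2

/-- Existence of a vector whose image under `T` is positive on a proper subset `W`. -/
lemma exists_z (T : Matrix (Fin n) (Fin n) ℝ) (hirr : IsIrred T)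
    (hZ : ∀ i j, i ≠ j → T i j ≤ 0) :
    ∀ W : Finset (Fin n), W ≠ Finset.univ → ∃ z : Fin n → ℝ, ∀ i ∈ W, 0 < T.mulVec z i := by
  classical
  intro W
  induction W using Finset.strongInduction with
  | _ W ih =>
    intro hWuniv
    by_cases hWne : W.Nonempty
    · -- boundary
      set Bd : Finset (Fin n) := W.filter (fun i => ∃ j ∉ W, T i j ≠ 0) with hBd
      have hBdne : Bd.Nonempty := by
        obtain ⟨i, hiW, j, hjW, hTij⟩ := hirr W hWne hWuniv
        exact ⟨i, by rw [hBd, Finset.mem_filter]; exact ⟨hiW, j, hjW, hTij⟩⟩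
      have hBdW : Bd ⊆ W := by rw [hBd]; exact Finset.filter_subset _ _
      set W' : Finset (Fin n) := W \ Bd with hW'
      have hW'ss : W' ⊂ W := by
        rw [hW']
        apply Finset.sdiff_ssubset hBdW hBdne
      have hW'univ : W' ≠ Finset.univ := by
        intro h
        apply hWuniv
        apply Finset.univ_subset_iff.mp
        rw [← h, hW']
        exact Finset.sdiff_subset
      obtain ⟨z', hz'⟩ := ih W' hW'ss hW'univ
      set y : Fin n → ℝ := fun j => if j ∈ W then 0 else -1 with hy
      have hTy : ∀ i ∈ W, 0 ≤ T.mulVec y i := by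
        intro i hiW
        rw [Matrix.mulVec, dotProduct]
        apply Finset.sum_nonneg
        intro j _
        simp only [hy]
        by_cases hj : j ∈ W
        · simp [hj]
        · have hji : j ≠ i := fun h => hj (h ▸ hiW)
          simp only [if_neg hj, mul_neg, mul_one]
          have := hZ i j (fun h => hj (h ▸ hiW))
          linarith
      have hTyB : ∀ i ∈ Bd, 0 < T.mulVec y i := by
        intro i hiB
        rw [hBd, Finset.mem_filter] at hiB
        obtain ⟨hiW, j₀, hj₀W, hTij₀⟩ := hiB
        rw [Matrix.mulVec, dotProduct]
        apply Finset.sum_pos'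
        · intro j _
          simp only [hy]
          by_cases hj : j ∈ W
          · simp [hj]
          · simp only [if_neg hj, mul_neg, mul_one]
            have := hZ i j (fun h => hj (h ▸ hiW))
            linarith
        · refine ⟨j₀, Finset.mem_univ _, ?_⟩
          simp only [hy, if_neg hj₀W]
          have hle := hZ i j₀ (fun h => hj₀W (h ▸ hiW))
          have : T i j₀ < 0 := lt_of_le_of_ne hle hTij₀
          nlinarith
      obtain ⟨t, ht⟩ : ∃ t : ℝ,
          t = 1 + Bd.sup' hBdne (fun i => |T.mulVec z' i| / T.mulVec y i) := ⟨_, rfl⟩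
      have ht0 : 0 ≤ t := by
        obtain ⟨i₁, hi₁⟩ := id hBdne
        have h1 : |T.mulVec z' i₁| / T.mulVec y i₁ ≤
            Bd.sup' hBdne (fun i => |T.mulVec z' i| / T.mulVec y i) :=
          Finset.le_sup' (fun i => |T.mulVec z' i| / T.mulVec y i) hi₁
        have h2 : 0 ≤ |T.mulVec z' i₁| / T.mulVec y i₁ :=
          div_nonneg (abs_nonneg _) (le_of_lt (hTyB i₁ hi₁))
        rw [ht]; linarith
      refine ⟨z' + t • y, ?_⟩
      intro i hiW
      have hlin : T.mulVec (z' + t • y) i = T.mulVec z' i + t * T.mulVec y i := by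
        rw [Matrix.mulVec_add, Matrix.mulVec_smul]
        simp
      rw [hlin]
      by_cases hiB : i ∈ Bd
      · have h1 : |T.mulVec z' i| / T.mulVec y i ≤
            Bd.sup' hBdne (fun i => |T.mulVec z' i| / T.mulVec y i) :=
          Finset.le_sup' (fun i => |T.mulVec z' i| / T.mulVec y i) hiB
        have h2 := hTyB i hiB
        have h3 : |T.mulVec z' i| ≤ (t - 1) * T.mulVec y i := by
          have h4 : |T.mulVec z' i| / T.mulVec y i ≤ t - 1 := by rw [ht]; linarith
          rw [div_le_iff₀ h2] at h4
          linarith [h4]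
        have h4 : -(T.mulVec z' i) ≤ |T.mulVec z' i| := neg_le_abs _
        nlinarith
      · have hiW' : i ∈ W' := by rw [hW', Finset.mem_sdiff]; exact ⟨hiW, hiB⟩
        have h1 := hz' i hiW'
        have h2 := hTy i hiW
        nlinarith
    · rw [Finset.not_nonempty_iff_eq_empty] at hWne
      subst hWne
      exact ⟨0, fun i hi => absurd hi (Finset.notMem_empty i)⟩

/-- Construction of a positive vector `u` with `(I - P + T P) u > 0`. -/
lemma build_u (T : Matrix (Fin n) (Fin n) ℝ) (hZ : ∀ i j, i ≠ j → T i j ≤ 0)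
    (hirr : IsIrred T) (w : Fin n → ℝ) (hw : ∀ i, 0 < w i) (hTw : T.mulVec w = 0)
    (p : Fin n → ℝ) (hp : ∀ i, 0 ≤ p i ∧ p i ≤ 1) (hpne : ∃ i, p i ≠ 1) :
    ∃ u : Fin n → ℝ, (∀ i, 0 < u i) ∧
      ∀ i, 0 < (1 - Matrix.diagonal p + T * Matrix.diagonal p).mulVec u i := by
  classical
  obtain ⟨i₀, hi₀⟩ := hpne
  have hne : (Finset.univ : Finset (Fin n)).Nonempty := ⟨i₀, Finset.mem_univ _⟩
  set W : Finset (Fin n) := Finset.univ.filter (fun i => p i = 1) with hW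
  have hWuniv : W ≠ Finset.univ := by
    intro h
    have : i₀ ∈ W := h ▸ Finset.mem_univ i₀
    rw [hW, Finset.mem_filter] at this
    exact hi₀ this.2
  obtain ⟨z, hz⟩ := exists_z T hirr hZ W hWuniv
  set Tz : Fin n → ℝ := T.mulVec z with hTz
  clear_value Tz
  set ε : ℝ := min 1 (Finset.univ.inf' hne fun i =>
    min (w i / (2 * (|z i| + 1)))
      (if p i < 1 ∧ 0 < p i then ((1 - p i) * w i) / (4 * p i * (|Tz i| + 1)) else 1)) with hε
  clear_value ε
  have hεpos : 0 < ε := by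
    rw [hε]
    apply lt_min one_pos
    rw [Finset.lt_inf'_iff]
    intro i _
    apply lt_min
    · apply div_pos (hw i)
      nlinarith [abs_nonneg (z i)]
    · split_ifs with h
      · apply div_pos
        · exact mul_pos (by linarith [h.1]) (hw i)
        · apply mul_pos (by nlinarith [h.2]) (by nlinarith [abs_nonneg (Tz i)])
      · exact one_pos
  have hε1 : ε ≤ 1 := by rw [hε]; exact min_le_left _ _
  have hεz : ∀ i, ε * |z i| ≤ w i / 2 := by
    intro i
    have h1 : ε ≤ w i / (2 * (|z i| + 1)) := by
      rw [hε]
      refine le_trans (min_le_right _ _) (le_trans (Finset.inf'_le _ (Finset.mem_univ i)) ?_)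
      exact min_le_left _ _
    have h2 : 0 < 2 * (|z i| + 1) := by nlinarith [abs_nonneg (z i)]
    rw [le_div_iff₀ h2] at h1
    nlinarith [abs_nonneg (z i), hεpos]
  have hεTz : ∀ i, p i < 1 → 0 < p i → ε * |Tz i| ≤ (1 - p i) * w i / (4 * p i) := by
    intro i h1 h2
    have hle : ε ≤ ((1 - p i) * w i) / (4 * p i * (|Tz i| + 1)) := by
      rw [hε]
      refine le_trans (min_le_right _ _) (le_trans (Finset.inf'_le _ (Finset.mem_univ i)) ?_)
      rw [if_pos ⟨h1, h2⟩]
      exact min_le_right _ _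
    have h3 : 0 < 4 * p i * (|Tz i| + 1) := by nlinarith [abs_nonneg (Tz i)]
    rw [le_div_iff₀ h3] at hle
    rw [le_div_iff₀ (by nlinarith : (0:ℝ) < 4 * p i)]
    nlinarith [abs_nonneg (Tz i), hεpos]
  set K : ℝ := 1 + Finset.univ.sup' hne
    (fun i => (|Tz i| + (3/2) * |T i i| * w i + 1) / w i) with hK
  clear_value K
  have hKb : ∀ i, |Tz i| + (3/2) * |T i i| * w i + 1 ≤ K * w i := by
    intro i
    have h1 : (|Tz i| + (3/2) * |T i i| * w i + 1) / w i ≤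
        Finset.univ.sup' hne (fun i => (|Tz i| + (3/2) * |T i i| * w i + 1) / w i) :=
      Finset.le_sup' (fun i => (|Tz i| + (3/2) * |T i i| * w i + 1) / w i) (Finset.mem_univ i)
    have h2 : (|Tz i| + (3/2) * |T i i| * w i + 1) / w i ≤ K - 1 := by rw [hK]; linarith
    rw [div_le_iff₀ (hw i)] at h2
    nlinarith [hw i]
  have hK0 : 0 < K := by
    by_contra hcon
    push_neg at hcon
    have h2 : K * w i₀ ≤ 0 := mul_nonpos_of_nonpos_of_nonneg hcon (le_of_lt (hw i₀))
    have h3 := hKb i₀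
    have h4 : 0 ≤ |T i₀ i₀| * w i₀ := mul_nonneg (abs_nonneg _) (le_of_lt (hw i₀))
    linarith [abs_nonneg (Tz i₀)]
  set u : Fin n → ℝ := fun i => if p i = 0 then K * w i else (w i + ε * z i) / p i with hu
  clear_value u
  have hwz : ∀ i, w i / 2 ≤ w i + ε * z i := by
    intro i
    have h1 := hεz i
    have h2 : -(ε * |z i|) ≤ ε * z i := by
      have := neg_abs_le (z i)
      nlinarith [hεpos]
    linarith
  have hwz' : ∀ i, w i + ε * z i ≤ (3/2) * w i := by
    intro i
    have h1 := hεz i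
    have h2 : ε * z i ≤ ε * |z i| := by
      have := le_abs_self (z i)
      nlinarith [hεpos]
    linarith
  have hupos : ∀ i, 0 < u i := by
    intro i
    simp only [hu]
    split_ifs with h
    · exact mul_pos hK0 (hw i)
    · have hpi : 0 < p i := lt_of_le_of_ne (hp i).1 (Ne.symm h)
      apply div_pos _ hpi
      linarith [hwz i, hw i]
  set x : Fin n → ℝ := fun j => p j * u j with hx
  clear_value x
  set ζ : Fin n → ℝ := fun j => if p j = 0 then w j + ε * z j else 0 with hζ
  clear_value ζ
  have hζnn : ∀ j, 0 ≤ ζ j := by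
    intro j
    simp only [hζ]
    split_ifs
    · linarith [hwz j, hw j]
    · exact le_rfl
  have hζub : ∀ j, ζ j ≤ (3/2) * w j := by
    intro j
    simp only [hζ]
    split_ifs
    · exact hwz' j
    · nlinarith [hw j]
  have hxeq : x = fun j => w j + ε * z j - ζ j := by
    funext j
    simp only [hx, hu, hζ]
    split_ifs with h
    · simp [h]
    · have hpj : p j ≠ 0 := h
      field_simp
      simp
  have hTx : ∀ i, T.mulVec x i = ε * Tz i - T.mulVec ζ i := by
    intro i
    have h1 : x = (w + ε • z) - ζ := by
      rw [hxeq]; funext j; simp [Pi.add_apply, Pi.smul_apply, smul_eq_mul]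
    rw [h1, Matrix.mulVec_sub, Matrix.mulVec_add, Matrix.mulVec_smul, hTw]
    simp [hTz]
  have hTζ1 : ∀ i, p i ≠ 0 → T.mulVec ζ i ≤ 0 := by
    intro i hpi
    rw [Matrix.mulVec, dotProduct]
    apply Finset.sum_nonpos
    intro j _
    simp only [hζ]
    split_ifs with h
    · have hji : j ≠ i := fun he => hpi (he ▸ h)
      have := hZ i j (Ne.symm hji)
      have := hζnn j
      have h2 : 0 ≤ w j + ε * z j := by linarith [hwz j, hw j]
      exact mul_nonpos_of_nonpos_of_nonneg (hZ i j (Ne.symm hji)) h2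
    · simp
  have hTζ2 : ∀ i, T.mulVec ζ i ≤ |T i i| * ((3/2) * w i) := by
    intro i
    rw [Matrix.mulVec, dotProduct]
    have h1 : ∀ j ∈ Finset.univ, T i j * ζ j ≤
        if j = i then |T i i| * ((3/2) * w i) else 0 := by
      intro j _
      by_cases hji : j = i
      · subst hji
        rw [if_pos rfl]
        apply mul_le_mul (le_abs_self _) (hζub j) (hζnn j) (abs_nonneg _)
      · rw [if_neg hji]
        exact mul_nonpos_of_nonpos_of_nonneg (hZ i j (Ne.symm hji)) (hζnn j)
    calc ∑ j, T i j * ζ j ≤ ∑ j, if j = i then |T i i| * ((3/2) * w i) else 0 :=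
          Finset.sum_le_sum h1
      _ = |T i i| * ((3/2) * w i) := by rw [Finset.sum_ite_eq' Finset.univ i]; simp
  have hAmul : ∀ i, (1 - Matrix.diagonal p + T * Matrix.diagonal p).mulVec u i =
      (1 - p i) * u i + T.mulVec x i := by
    intro i
    rw [Matrix.add_mulVec, Matrix.sub_mulVec, Matrix.one_mulVec, ← Matrix.mulVec_mulVec]
    have hPu : (Matrix.diagonal p).mulVec u = x := by
      funext j
      rw [Matrix.mulVec_diagonal, hx]
    rw [hPu]
    simp only [Pi.add_apply, Pi.sub_apply, hx]
    ring
  refine ⟨u, hupos, ?_⟩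
  intro i
  rw [hAmul i, hTx i]
  rcases eq_or_ne (p i) 1 with hp1 | hp1
  · have hiW : i ∈ W := by rw [hW, Finset.mem_filter]; exact ⟨Finset.mem_univ i, hp1⟩
    have h1 : 0 < Tz i := hz i hiW
    have h2 : T.mulVec ζ i ≤ 0 := hTζ1 i (by rw [hp1]; norm_num)
    rw [hp1]
    have h3 : 0 < ε * Tz i := mul_pos hεpos h1
    linarith
  rcases eq_or_ne (p i) 0 with hp0 | hp0
  · have hui : u i = K * w i := by rw [hu]; exact if_pos hp0
    have h1 : T.mulVec ζ i ≤ |T i i| * ((3/2) * w i) := hTζ2 i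
    have h2 : -(ε * |Tz i|) ≤ ε * Tz i := by
      have := neg_abs_le (Tz i)
      nlinarith [hεpos]
    have h3 : ε * |Tz i| ≤ |Tz i| := by nlinarith [abs_nonneg (Tz i), hεpos, hε1]
    have h4 := hKb i
    rw [hp0, hui]
    linarith
  · -- 0 < p i < 1
    have hpi0 : 0 < p i := lt_of_le_of_ne (hp i).1 (Ne.symm hp0)
    have hpi1 : p i < 1 := lt_of_le_of_ne (hp i).2 hp1
    have hui : u i = (w i + ε * z i) / p i := by rw [hu]; exact if_neg hp0
    have h1 : T.mulVec ζ i ≤ 0 := hTζ1 i hp0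
    have h2 : ε * |Tz i| ≤ (1 - p i) * w i / (4 * p i) := hεTz i hpi1 hpi0
    have h3 : -(ε * |Tz i|) ≤ ε * Tz i := by
      have := neg_abs_le (Tz i)
      nlinarith [hεpos]
    have h4 : (1 - p i) * u i ≥ (1 - p i) * w i / (2 * p i) := by
      rw [hui]
      rw [ge_iff_le, div_le_iff₀ (by linarith : (0:ℝ) < 2 * p i)]
      have h5 : w i / 2 ≤ w i + ε * z i := hwz i
      have h6 : (1 - p i) * ((w i + ε * z i) / p i) * (2 * p i) =
          2 * (1 - p i) * (w i + ε * z i) := by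
        field_simp
      rw [h6]
      nlinarith
    have h7 : 0 < (1 - p i) * w i / (4 * p i) := by
      apply div_pos (mul_pos (by linarith) (hw i)) (by linarith)
    have h8 : (1 - p i) * w i / (2 * p i) = 2 * ((1 - p i) * w i / (4 * p i)) := by
      field_simp
      ring
    linarith

/-- Spectrum is invariant under transposition. -/
lemma spectrum_transpose (M : Matrix (Fin n) (Fin n) ℂ) :
    spectrum ℂ Mᵀ = spectrum ℂ M := by
  ext μ
  have heq : ∀ N : Matrix (Fin n) (Fin n) ℂ,
      algebraMap ℂ (Matrix (Fin n) (Fin n) ℂ) μ - Nᵀ =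
        (algebraMap ℂ (Matrix (Fin n) (Fin n) ℂ) μ - N)ᵀ := by
    intro N
    rw [Matrix.transpose_sub]
    congr 1
    rw [Algebra.algebraMap_eq_smul_one, Matrix.transpose_smul, Matrix.transpose_one]
  simp only [spectrum.mem_iff, Matrix.isUnit_iff_isUnit_det, heq M, Matrix.det_transpose]

lemma isMmat_transpose {A : Matrix (Fin n) (Fin n) ℝ} (h : IsMmat Aᵀ) : IsMmat A := by
  obtain ⟨α, B, hB, hs, heq⟩ := h
  refine ⟨α, Bᵀ, fun i j => hB j i, ?_, ?_⟩
  · have hset : {r : ℝ | ∃ μ ∈ spectrum ℂ (Bᵀ.map (fun a => (a : ℂ))), r = ‖μ‖} =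
        {r : ℝ | ∃ μ ∈ spectrum ℂ (B.map (fun a => (a : ℂ))), r = ‖μ‖} := by
      have h1 : Bᵀ.map (fun a => (a : ℂ)) = (B.map (fun a => (a : ℂ)))ᵀ := rfl
      rw [h1, spectrum_transpose]
    rw [specRad, hset]
    exact hs
  · have := congrArg Matrix.transpose heq
    rw [Matrix.transpose_transpose, Matrix.transpose_sub, Matrix.transpose_smul,
      Matrix.transpose_one] at this
    exact this

end Stmt4Aux

open Stmt4Aux in
/-- If `T` is irreducible and satisfies condition T2, then for any diagonal
`P` with `O ≤ P ≤ I` and `P ≠ I`, both `I − P + T·P` and `I − P + P·T` are M-matrices;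
in particular they are invertible with entrywise nonnegative inverses. -/
theorem stmt4 {n : ℕ} (T : Matrix (Fin n) (Fin n) ℝ) (v w : Fin n → ℝ)
    (hT : CondT2 T v w)
    (p : Fin n → ℝ) (hp : ∀ i, 0 ≤ p i ∧ p i ≤ 1) (P : Matrix (Fin n) (Fin n) ℝ)
    (hP : P = Matrix.diagonal p) (hPne : P ≠ 1) :
    IsMmat (1 - P + T * P) ∧ IsMmat (1 - P + P * T) ∧
    IsUnit (1 - P + T * P) ∧ IsUnit (1 - P + P * T) ∧
    (∀ i j, 0 ≤ (1 - P + T * P)⁻¹ i j) ∧ (∀ i j, 0 ≤ (1 - P + P * T)⁻¹ i j) := by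
  classical
  obtain ⟨hirr, hv, hw, hkv, hkw, hM⟩ := hT
  subst hP
  rcases Nat.eq_zero_or_pos n with rfl | hn
  · exact absurd (by ext i j; exact i.elim0) hPne
  have hTw : T.mulVec w = 0 := by
    have hmem : w ∈ LinearMap.ker (Matrix.mulVecLin T) := by
      rw [hkw]; exact Submodule.mem_span_singleton_self w
    rw [LinearMap.mem_ker, Matrix.mulVecLin_apply] at hmem
    exact hmem
  have hTv : Tᵀ.mulVec v = 0 := by
    have hmem : v ∈ LinearMap.ker (Matrix.mulVecLin Tᵀ) := by
      rw [hkv]; exact Submodule.mem_span_singleton_self v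
    rw [LinearMap.mem_ker, Matrix.mulVecLin_apply] at hmem
    exact hmem
  have hd1 : IsMmat (T + Matrix.diagonal (fun _ => (1 : ℝ))) := by
    apply hM _ (fun _ => zero_le_one)
    intro h
    have := congrFun h ⟨0, hn⟩
    norm_num at this
  have hZ : ∀ i j, i ≠ j → T i j ≤ 0 := by
    obtain ⟨α, B, hB, -, heq⟩ := hd1
    intro i j hij
    have h1 := congrFun (congrFun heq i) j
    simp only [Matrix.add_apply, Matrix.diagonal_apply_ne _ hij, Matrix.sub_apply,
      Matrix.smul_apply, Matrix.one_apply_ne hij, smul_eq_mul, mul_zero, zero_sub,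
      add_zero] at h1
    linarith [hB i j]
  have hZt : ∀ i j, i ≠ j → Tᵀ i j ≤ 0 := fun i j hij => hZ j i (Ne.symm hij)
  have hirrT : IsIrred Tᵀ := by
    intro S hSne hSuniv
    have hcne : (Sᶜ : Finset (Fin n)).Nonempty :=
      Finset.nonempty_iff_ne_empty.mpr fun h => hSuniv ((Finset.compl_eq_empty_iff S).mp h)
    have hcuniv : (Sᶜ : Finset (Fin n)) ≠ Finset.univ :=
      (Finset.compl_ne_univ_iff_nonempty S).mpr hSne
    obtain ⟨i, hiS, j, hjS, hij⟩ := hirr Sᶜ hcne hcuniv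
    refine ⟨j, by simpa using hjS, i, by simpa using hiS, ?_⟩
    simpa [Matrix.transpose_apply] using hij
  have hp1ex : ∃ i, p i ≠ 1 := by
    by_contra h
    push_neg at h
    exact hPne (by rw [show p = fun _ => (1 : ℝ) from funext h, Matrix.diagonal_one])
  -- first matrix
  obtain ⟨u₁, hu₁, hA₁u⟩ := build_u T hZ hirr w hw hTw p hp hp1ex
  have hZ₁ : ∀ i j, i ≠ j → (1 - Matrix.diagonal p + T * Matrix.diagonal p) i j ≤ 0 := by
    intro i j hij
    simp only [Matrix.add_apply, Matrix.sub_apply, Matrix.one_apply_ne hij,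
      Matrix.diagonal_apply_ne _ hij, Matrix.mul_diagonal, sub_zero, zero_sub, neg_add_eq_sub]
    have := mul_nonpos_of_nonpos_of_nonneg (hZ i j hij) (hp j).1
    linarith
  obtain ⟨hm₁, hun₁, hi₁⟩ := master _ hZ₁ u₁ hu₁ hA₁u
  -- second matrix
  obtain ⟨u₂, hu₂, hA₂u⟩ := build_u Tᵀ hZt hirrT v hv hTv p hp hp1ex
  have hZ₂ : ∀ i j, i ≠ j → (1 - Matrix.diagonal p + Tᵀ * Matrix.diagonal p) i j ≤ 0 := by
    intro i j hij
    simp only [Matrix.add_apply, Matrix.sub_apply, Matrix.one_apply_ne hij,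
      Matrix.diagonal_apply_ne _ hij, Matrix.mul_diagonal, sub_zero, zero_sub, neg_add_eq_sub]
    have := mul_nonpos_of_nonpos_of_nonneg (hZt i j hij) (hp j).1
    linarith
  obtain ⟨hm₂, hun₂, hi₂⟩ := master _ hZ₂ u₂ hu₂ hA₂u
  have htr : (1 - Matrix.diagonal p + Matrix.diagonal p * T)ᵀ =
      1 - Matrix.diagonal p + Tᵀ * Matrix.diagonal p := by
    rw [Matrix.transpose_add, Matrix.transpose_sub, Matrix.transpose_one, Matrix.transpose_mul,
      Matrix.diagonal_transpose]
  have hm₂' : IsMmat (1 - Matrix.diagonal p + Matrix.diagonal p * T) := by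
    apply isMmat_transpose
    rw [htr]
    exact hm₂
  have hun₂' : IsUnit (1 - Matrix.diagonal p + Matrix.diagonal p * T) := by
    rw [Matrix.isUnit_iff_isUnit_det, ← Matrix.det_transpose, htr,
      ← Matrix.isUnit_iff_isUnit_det]
    exact hun₂
  have hi₂' : ∀ i j, 0 ≤ (1 - Matrix.diagonal p + Matrix.diagonal p * T)⁻¹ i j := by
    intro i j
    have h1 : ((1 - Matrix.diagonal p + Matrix.diagonal p * T)⁻¹)ᵀ =
        (1 - Matrix.diagonal p + Tᵀ * Matrix.diagonal p)⁻¹ := by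
      rw [Matrix.transpose_nonsing_inv, htr]
    have h2 : (1 - Matrix.diagonal p + Matrix.diagonal p * T)⁻¹ i j =
        (1 - Matrix.diagonal p + Tᵀ * Matrix.diagonal p)⁻¹ j i := by
      rw [← h1, Matrix.transpose_apply]
    rw [h2]
    exact hi₂ j i
  exact ⟨hm₁, hm₂', hun₁, hun₂', hi₁, hi₂'⟩
end

section
/- Let T be an n×n real M-matrix. Then for every diagonal matrix Pᵏ arising in the iteration P⁰ = O, (I − Pᵏ + T·Pᵏ)·x^{k+1} = b, Pᵏ = P(xᵏ), the matrix I − Pᵏ + T·Pᵏ is an M-matrix (hence invertible), so the iteration is well defined for all k. -/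
open Matrix

attribute [local instance] Matrix.linftyOpNormedRing Matrix.linftyOpNormedAlgebra


lemma eig_abs_le {n : ℕ} {C : Matrix (Fin n) (Fin n) ℝ} (hC : ∀ i j, 0 ≤ C i j)
    {u : Fin n → ℝ} (hu : ∀ i, 0 < u i) {γ : ℝ} (h : ∀ i, (C *ᵥ u) i ≤ γ * u i)
    {μ : ℂ} (hμ : μ ∈ spectrum ℂ (C.map (fun a => (a : ℂ)))) : ‖μ‖ ≤ γ := by
  rw [spectrum.mem_iff] at hμ
  rw [Matrix.isUnit_iff_isUnit_det, isUnit_iff_ne_zero, not_not] at hμ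
  obtain ⟨z, hz0, hz⟩ := (Matrix.exists_mulVec_eq_zero_iff).2 hμ
  have hzC : (C.map (fun a => (a : ℂ))) *ᵥ z = μ • z := by
    rw [sub_mulVec, sub_eq_zero] at hz
    rw [← hz]
    ext i
    simp [Matrix.algebraMap_eq_diagonal, Matrix.mulVec_diagonal]
  obtain ⟨j0, hj0ne⟩ := Function.ne_iff.1 hz0
  obtain ⟨i, -, hi⟩ := Finset.exists_max_image Finset.univ
    (fun j => ‖z j‖ / u j) ⟨j0, Finset.mem_univ j0⟩
  have hdiv : 0 < ‖z i‖ / u i :=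
    lt_of_lt_of_le (div_pos (by simpa using hj0ne) (hu j0)) (hi j0 (Finset.mem_univ j0))
  have hzi : 0 < ‖z i‖ := by
    rcases div_pos_iff.1 hdiv with ⟨h1, -⟩ | ⟨-, h2⟩
    · exact h1
    · exact absurd (hu i) (not_lt.2 h2.le)
  have h3 : ∀ j, ‖z j‖ ≤ u j * ‖z i‖ / u i := by
    intro j
    rw [le_div_iff₀ (hu i)]
    have := hi j (Finset.mem_univ j)
    rw [div_le_div_iff₀ (hu j) (hu i)] at this
    nlinarith
  have key : ‖μ‖ * ‖z i‖ ≤ γ * ‖z i‖ := by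
    have h1 : ‖μ‖ * ‖z i‖ = ‖((C.map (fun a => (a : ℂ))) *ᵥ z) i‖ := by
      rw [hzC]; simp [norm_smul]
    have h2 : ‖((C.map (fun a => (a : ℂ))) *ᵥ z) i‖ ≤ ∑ j, C i j * ‖z j‖ := by
      rw [Matrix.mulVec, dotProduct]
      refine (norm_sum_le _ _).trans (Finset.sum_le_sum fun j _ => ?_)
      rw [Matrix.map_apply, norm_mul, Complex.norm_real, Real.norm_of_nonneg (hC i j)]
    have h4 : ∑ j, C i j * ‖z j‖ ≤ (∑ j, C i j * u j) * (‖z i‖ / u i) := by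
      rw [Finset.sum_mul]
      refine Finset.sum_le_sum fun j _ => ?_
      rw [mul_assoc]
      exact mul_le_mul_of_nonneg_left (by rw [← mul_div_assoc]; exact h3 j) (hC i j)
    have h5 : (∑ j, C i j * u j) * (‖z i‖ / u i) ≤ γ * u i * (‖z i‖ / u i) := by
      exact mul_le_mul_of_nonneg_right (h i) hdiv.le
    have h6 : γ * u i * (‖z i‖ / u i) = γ * ‖z i‖ := by
      rw [mul_assoc, mul_comm (u i), div_mul_cancel₀ _ (hu i).ne']
    calc ‖μ‖ * ‖z i‖ = _ := h1
      _ ≤ _ := h2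
      _ ≤ _ := h4
      _ ≤ _ := h5
      _ = _ := h6
  exact le_of_mul_le_mul_right (by simpa [Complex.norm_def] using key) hzi


lemma entry_nonneg_pow {n : ℕ} {B : Matrix (Fin n) (Fin n) ℝ} (hB : ∀ i j, 0 ≤ B i j) :
    ∀ (k : ℕ) (i j : Fin n), 0 ≤ (B ^ k) i j := by
  intro k
  induction k with
  | zero => intro i j; by_cases h : i = j <;> simp [h, Matrix.one_apply]
  | succ k ih =>
    intro i j
    rw [pow_succ, Matrix.mul_apply]
    exact Finset.sum_nonneg fun l _ => mul_nonneg (ih i l) (hB l j)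

lemma exists_pos_vec {n : ℕ} {B : Matrix (Fin n) (Fin n) ℝ} (hB : ∀ i j, 0 ≤ B i j)
    {α : ℝ} (hρ : specRad B < α) :
    ∃ u : Fin n → ℝ, (∀ i, 0 < u i) ∧ ∀ i, (B *ᵥ u) i < α * u i := by
  rcases isEmpty_or_nonempty (Fin n) with hn | hn
  · exact ⟨fun _ => 1, fun i => hn.elim i, fun i => hn.elim i⟩
  set B' : Matrix (Fin n) (Fin n) ℂ := B.map (fun a => (a : ℂ)) with hB'
  -- every spectral value's norm is ≤ specRad B
  have hbdd : ∀ μ ∈ spectrum ℂ B', ‖μ‖ ≤ specRad B := by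
    intro μ hμ
    refine le_csSup ⟨‖B'‖, ?_⟩ ⟨μ, hμ, rfl⟩
    rintro r ⟨ν, hν, rfl⟩
    exact spectrum.norm_le_norm_of_mem hν
  have hα0 : 0 < α := by
    obtain ⟨μ, hμ⟩ := spectrum.nonempty B'
    exact lt_of_le_of_lt (le_trans (norm_nonneg μ) (hbdd μ hμ)) hρ
  -- spectral radius < α
  have hsr : spectralRadius ℂ B' < (α.toNNReal : NNReal) := by
    apply spectrum.spectralRadius_lt_of_forall_lt
    intro μ hμ
    have : ‖μ‖ < α := lt_of_le_of_lt (hbdd μ hμ) hρ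
    rw [← norm_toNNReal]
    exact (Real.toNNReal_lt_toNNReal_iff hα0).2 this
  -- Gelfand: get m ≥ 1 with ‖B'^m‖ < α^m
  have hg := spectrum.pow_nnnorm_pow_one_div_tendsto_nhds_spectralRadius B'
  have hev : ∀ᶠ m : ℕ in Filter.atTop, ((‖B' ^ m‖₊ : ENNReal) ^ (1 / (m:ℝ))) < ((α.toNNReal : NNReal) : ENNReal) :=
    hg.eventually_lt_const hsr
  obtain ⟨m, hmlt, hm1⟩ := (hev.and (Filter.eventually_ge_atTop 1)).exists
  have hm0 : (m : ℝ) ≠ 0 := Nat.cast_ne_zero.2 (by omega)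
  -- convert to real inequality
  have hnorm : ‖B' ^ m‖ < α ^ m := by
    have h1 : (‖B' ^ m‖₊ : ENNReal) ^ (1 / (m:ℝ)) < ((α.toNNReal : NNReal) : ENNReal) := hmlt
    rw [← ENNReal.coe_rpow_of_nonneg _ (by positivity)] at h1
    rw [ENNReal.coe_lt_coe] at h1
    have h2 : (‖B' ^ m‖₊ ^ (1 / (m:ℝ))) ^ (m : ℝ) < α.toNNReal ^ (m : ℝ) :=
      NNReal.rpow_lt_rpow h1 (by positivity)
    rw [← NNReal.rpow_mul, one_div_mul_cancel hm0, NNReal.rpow_one] at h2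
    have := h2
    calc ‖B' ^ m‖ = ((‖B' ^ m‖₊ : NNReal) : ℝ) := rfl
      _ < ((α.toNNReal ^ (m:ℝ) : NNReal) : ℝ) := by exact_mod_cast this
      _ = α ^ m := by
          rw [NNReal.rpow_natCast, NNReal.coe_pow, Real.coe_toNNReal _ hα0.le]
  -- transfer to real powers of B
  have hmap : ∀ k : ℕ, B' ^ k = (B ^ k).map (fun a => (a : ℂ)) := by
    intro k
    have h1 : B' = Complex.ofRealHom.mapMatrix B := rfl
    have h2 : (B ^ k).map (fun a => (a : ℂ)) = Complex.ofRealHom.mapMatrix (B ^ k) := rfl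
    rw [h1, h2, map_pow]
  -- row sums of B ^ m are < α ^ m
  set s : ℕ → Fin n → ℝ := fun k i => ∑ j, (B ^ k) i j with hs
  have hrow : ∀ i, s m i < α ^ m := by
    intro i
    have h1 : ((s m i : ℝ) : ℂ) = (B' ^ m *ᵥ (fun _ => (1 : ℂ))) i := by
      rw [hmap]
      simp [Matrix.mulVec, dotProduct, hs]
    have h2 : |s m i| ≤ ‖B' ^ m‖ := by
      have h3 : ‖(B' ^ m *ᵥ (fun _ => (1 : ℂ))) i‖ ≤ ‖B' ^ m *ᵥ (fun _ => (1 : ℂ))‖ :=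
        norm_le_pi_norm _ i
      have h4 : ‖B' ^ m *ᵥ (fun _ => (1 : ℂ))‖ ≤ ‖B' ^ m‖ * ‖(fun _ => (1 : ℂ) : Fin n → ℂ)‖ :=
        Matrix.linfty_opNorm_mulVec _ _
      have h5 : ‖(fun _ => (1 : ℂ) : Fin n → ℂ)‖ = 1 := by
        rw [pi_norm_const]; exact norm_one
      rw [← h1] at h3
      rw [Complex.norm_real, Real.norm_eq_abs] at h3
      rw [h5, mul_one] at h4
      exact h3.trans h4
    calc s m i ≤ |s m i| := le_abs_self _
      _ ≤ ‖B' ^ m‖ := h2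
      _ < α ^ m := hnorm
  have hsnn : ∀ k i, 0 ≤ s k i := fun k i =>
    Finset.sum_nonneg fun j _ => entry_nonneg_pow hB k i j
  have hs0 : ∀ i, s 0 i = 1 := by
    intro i
    simp [hs, Matrix.one_apply]
  -- the positive vector
  set u : Fin n → ℝ := fun i => ∑ k ∈ Finset.range m, α ^ (m - 1 - k) * s k i with hu
  have hstep : ∀ k (i : Fin n), ∑ l, B i l * s k l = s (k + 1) i := by
    intro k i
    simp only [hs, pow_succ', Matrix.mul_apply, Finset.mul_sum]
    exact Finset.sum_comm
  refine ⟨u, ?_, ?_⟩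
  · intro i
    have h1 : (0:ℝ) < α ^ (m - 1 - 0) * s 0 i := by
      rw [hs0]; positivity
    refine lt_of_lt_of_le h1 (Finset.single_le_sum (f := fun k => α ^ (m - 1 - k) * s k i)
      (fun k _ => mul_nonneg (by positivity) (hsnn k i)) (Finset.mem_range.2 (by omega)))
  · intro i
    -- compute B *ᵥ u
    have hBu : (B *ᵥ u) i = ∑ k ∈ Finset.range m, α ^ (m - 1 - k) * s (k + 1) i := by
      rw [Matrix.mulVec, dotProduct]
      calc ∑ l, B i l * u l
          = ∑ k ∈ Finset.range m, α ^ (m - 1 - k) * ∑ l, B i l * s k l := by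
            simp_rw [hu, Finset.mul_sum]
            rw [Finset.sum_comm]
            exact Finset.sum_congr rfl fun k _ => Finset.sum_congr rfl fun l _ => by ring
        _ = ∑ k ∈ Finset.range m, α ^ (m - 1 - k) * s (k + 1) i :=
            Finset.sum_congr rfl fun k _ => by rw [hstep]
    have htel : α * u i - (B *ᵥ u) i = α ^ m - s m i := by
      rw [hBu, hu]
      have h1 : α * (∑ k ∈ Finset.range m, α ^ (m - 1 - k) * s k i)
          = ∑ k ∈ Finset.range m, α ^ (m - k) * s k i := by
        rw [Finset.mul_sum]
        refine Finset.sum_congr rfl fun k hk => ?_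
        have hk' : k < m := Finset.mem_range.1 hk
        have : m - 1 - k + 1 = m - k := by omega
        rw [← mul_assoc, ← pow_succ', this]
      have h2 : ∀ k ∈ Finset.range m, α ^ (m - 1 - k) * s (k + 1) i
          = α ^ (m - (k + 1)) * s (k + 1) i := by
        intro k hk
        congr 2
        omega
      rw [h1, Finset.sum_congr rfl h2, ← Finset.sum_sub_distrib,
        Finset.sum_range_sub' (fun k => α ^ (m - k) * s k i)]
      rw [hs0, Nat.sub_zero, Nat.sub_self, pow_zero]
      ring
    have := hrow i
    linarith



lemma mmat_isUnit {n : ℕ} {M : Matrix (Fin n) (Fin n) ℝ} (h : IsMmat M) : IsUnit M := by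
  rcases isEmpty_or_nonempty (Fin n) with hn | hn
  · have : Subsingleton (Matrix (Fin n) (Fin n) ℝ) :=
      ⟨fun a b => by ext i j; exact hn.elim i⟩
    exact isUnit_of_subsingleton M
  obtain ⟨β, C, hC, hρ, rfl⟩ := h
  by_contra hunit
  rw [Matrix.isUnit_iff_isUnit_det, isUnit_iff_ne_zero, not_not] at hunit
  have hmapeq : (algebraMap ℂ (Matrix (Fin n) (Fin n) ℂ)) (β : ℂ) - C.map (fun a => (a:ℂ))
      = (β • (1 : Matrix (Fin n) (Fin n) ℝ) - C).map (fun a => (a:ℂ)) := by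
    ext i j
    simp only [Matrix.sub_apply, Matrix.map_apply, Matrix.algebraMap_eq_diagonal,
      Matrix.diagonal_apply, Matrix.smul_apply, Matrix.one_apply, smul_eq_mul,
      Pi.algebraMap_apply, Algebra.algebraMap_self, RingHom.id_apply]
    by_cases hij : i = j <;> simp [hij]
  have hdet : ((algebraMap ℂ (Matrix (Fin n) (Fin n) ℂ)) (β : ℂ)
      - C.map (fun a => (a:ℂ))).det = 0 := by
    rw [hmapeq]
    have h2 := RingHom.map_det Complex.ofRealHom (β • (1 : Matrix (Fin n) (Fin n) ℝ) - C)
    have h3 : (β • (1 : Matrix (Fin n) (Fin n) ℝ) - C).map (fun a => (a:ℂ))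
        = Complex.ofRealHom.mapMatrix (β • (1 : Matrix (Fin n) (Fin n) ℝ) - C) := rfl
    rw [h3, ← h2, hunit, map_zero]
  have hmem : (β : ℂ) ∈ spectrum ℂ (C.map (fun a => (a:ℂ))) := by
    rw [spectrum.mem_iff, Matrix.isUnit_iff_isUnit_det, isUnit_iff_ne_zero, not_not]
    exact hdet
  have hbdd : BddAbove {r : ℝ | ∃ μ ∈ spectrum ℂ (C.map (fun a => (a : ℂ))), r = ‖μ‖} := by
    refine ⟨‖C.map (fun a => (a:ℂ))‖, ?_⟩
    rintro r ⟨ν, hν, rfl⟩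
    exact spectrum.norm_le_norm_of_mem hν
  have hle : ‖(β : ℂ)‖ ≤ specRad C := le_csSup hbdd ⟨(β : ℂ), hmem, rfl⟩
  rw [Complex.norm_real, Real.norm_eq_abs] at hle
  have := le_abs_self β
  linarith

lemma specRad_le {n : ℕ} {C : Matrix (Fin n) (Fin n) ℝ} {γ : ℝ} (hγ : 0 ≤ γ)
    (h : ∀ μ ∈ spectrum ℂ (C.map (fun a => (a : ℂ))), ‖μ‖ ≤ γ) : specRad C ≤ γ :=
  Real.sSup_le (by rintro r ⟨μ, hμ, rfl⟩; exact h μ hμ) hγ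

lemma mmat_step {n : ℕ} {T : Matrix (Fin n) (Fin n) ℝ} (hT : IsMmat T)
    {p : Fin n → ℝ} (hp : ∀ i, p i = 0 ∨ p i = 1) :
    IsMmat (1 - diagonal p + T * diagonal p) := by
  obtain ⟨α, B, hB, hρ, rfl⟩ := hT
  obtain ⟨u, hu, hBu⟩ := exists_pos_vec hB hρ
  set β : ℝ := max α 1 with hβ
  have hβ1 : (1:ℝ) ≤ β := le_max_right _ _
  have hβα : α ≤ β := le_max_left _ _
  set M : Matrix (Fin n) (Fin n) ℝ :=
    1 - diagonal p + (α • (1 : Matrix (Fin n) (Fin n) ℝ) - B) * diagonal p with hM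
  set C : Matrix (Fin n) (Fin n) ℝ := β • (1 : Matrix (Fin n) (Fin n) ℝ) - M with hCdef
  have hCe : ∀ i j, C i j = (β - 1) * (if i = j then 1 else 0)
      + (1 - α) * (if i = j then p i else 0) + B i j * p j := by
    intro i j
    simp only [hCdef, hM, Matrix.sub_apply, Matrix.add_apply, Matrix.smul_apply,
      Matrix.mul_diagonal, Matrix.diagonal_apply, Matrix.one_apply, smul_eq_mul]
    by_cases hij : i = j <;> simp [hij] <;> ring
  have hpnn : ∀ j, 0 ≤ p j := fun j => by rcases hp j with h | h <;> rw [h] <;> norm_num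
  have hCnn : ∀ i j, 0 ≤ C i j := by
    intro i j
    rw [hCe]
    by_cases hij : i = j
    · subst hij
      rcases hp i with h | h <;> rw [h] <;> simp <;> nlinarith [hB i i]
    · simp only [if_neg hij]
      have := mul_nonneg (hB i j) (hpnn j)
      linarith
  -- the comparison vector
  set L : ℝ := 1 + ∑ j, (B *ᵥ u) j with hL
  have hBunn : ∀ j, 0 ≤ (B *ᵥ u) j := by
    intro j
    rw [Matrix.mulVec, dotProduct]
    exact Finset.sum_nonneg fun l _ => mul_nonneg (hB j l) (hu l).le
  have hLpos : 0 < L := by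
    have := Finset.sum_nonneg (fun j (_ : j ∈ Finset.univ) => hBunn j)
    rw [hL]; linarith
  have hLgt : ∀ i, (B *ᵥ u) i < L := by
    intro i
    have h1 : (B *ᵥ u) i ≤ ∑ j, (B *ᵥ u) j :=
      Finset.single_le_sum (fun j _ => hBunn j) (Finset.mem_univ i)
    rw [hL]; linarith
  set w : Fin n → ℝ := fun i => if p i = 1 then u i else L with hw
  have hwpos : ∀ i, 0 < w i := by
    intro i
    rw [hw]
    dsimp only
    split_ifs
    · exact hu i
    · exact hLpos
  have hCw : ∀ i, (C *ᵥ w) i < β * w i := by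
    intro i
    have hsum : (C *ᵥ w) i
        = (β - 1) * w i + (1 - α) * p i * w i + ∑ j, B i j * p j * w j := by
      rw [Matrix.mulVec, dotProduct]
      simp_rw [hCe, add_mul]
      rw [Finset.sum_add_distrib, Finset.sum_add_distrib]
      simp [ite_mul, mul_ite, Finset.sum_ite_eq, mul_assoc]
    have hsb : ∑ j, B i j * p j * w j ≤ (B *ᵥ u) i := by
      rw [Matrix.mulVec, dotProduct]
      refine Finset.sum_le_sum fun j _ => ?_
      rcases hp j with h | h
      · rw [h]; simpa using mul_nonneg (hB i j) (hu j).le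
      · rw [hw]; dsimp only; rw [h, if_pos rfl, mul_one]
    rcases hp i with hpi | hpi
    · -- p i = 0, w i = L
      have hwi : w i = L := by rw [hw]; dsimp only; rw [hpi]; norm_num
      rw [hsum, hwi, hpi]
      have := hLgt i
      nlinarith
    · -- p i = 1, w i = u i
      have hwi : w i = u i := by rw [hw]; dsimp only; rw [hpi, if_pos rfl]
      rw [hsum, hwi, hpi]
      have := hBu i
      nlinarith [hu i]
  -- the sup bound
  set γ : ℝ := Finset.univ.fold max 0 (fun i => (C *ᵥ w) i / w i) with hγdef
  have hγ0 : 0 ≤ γ := (Finset.le_fold_max _).2 (Or.inl le_rfl)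
  have hγβ : γ < β := by
    rw [hγdef, Finset.fold_max_lt]
    exact ⟨by linarith, fun i _ => (div_lt_iff₀ (hwpos i)).2 (hCw i)⟩
  have hγle : ∀ i, (C *ᵥ w) i ≤ γ * w i := by
    intro i
    have h1 : (C *ᵥ w) i / w i ≤ γ :=
      (Finset.le_fold_max _).2 (Or.inr ⟨i, Finset.mem_univ i, le_rfl⟩)
    calc (C *ᵥ w) i = ((C *ᵥ w) i / w i) * w i := by
          rw [div_mul_cancel₀ _ (hwpos i).ne']
      _ ≤ γ * w i := mul_le_mul_of_nonneg_right h1 (hwpos i).le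
  refine ⟨β, C, hCnn, lt_of_le_of_lt (specRad_le hγ0 fun μ hμ =>
    eig_abs_le hCnn hwpos hγle hμ) hγβ, ?_⟩
  rw [hCdef, sub_sub_cancel]

/-- If `T` is an M-matrix, the iteration `P⁰ = O`,
`(I − Pᵏ + T·Pᵏ)·x^{k+1} = b`, `Pᵏ = P(xᵏ)` is well defined for all `k`: there are iterates
satisfying the recursion, and every matrix `I − Pᵏ + T·Pᵏ` is an M-matrix (hence invertible). -/
theorem stmt6 {n : ℕ} (T : Matrix (Fin n) (Fin n) ℝ) (hT : IsMmat T) (b : Fin n → ℝ) :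
    ∃ (x : ℕ → Fin n → ℝ) (P : ℕ → Matrix (Fin n) (Fin n) ℝ),
      P 0 = 0 ∧ (∀ k, 1 ≤ k → P k = Pmat (x k)) ∧
      ∀ k, IsMmat (1 - P k + T * P k) ∧ IsUnit (1 - P k + T * P k) ∧
        (1 - P k + T * P k) *ᵥ x (k + 1) = b := by
  classical
  let F : Matrix (Fin n) (Fin n) ℝ → (Fin n → ℝ) := fun P => (1 - P + T * P)⁻¹ *ᵥ b
  let y : ℕ → Fin n → ℝ := fun k => Nat.rec (F 0) (fun _ yk => F (Pmat yk)) k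
  refine ⟨fun k => y (k - 1), fun k => if k = 0 then 0 else Pmat (y (k - 1)), ?_, ?_, ?_⟩
  · simp
  · intro k hk
    beta_reduce
    rw [if_neg (by omega)]
  · intro k
    beta_reduce
    obtain ⟨p, hp01, hPk⟩ : ∃ p : Fin n → ℝ, (∀ i, p i = 0 ∨ p i = 1) ∧
        (if k = 0 then (0 : Matrix (Fin n) (Fin n) ℝ) else Pmat (y (k - 1)))
          = Matrix.diagonal p := by
      by_cases hk : k = 0
      · exact ⟨fun _ => 0, fun _ => Or.inl rfl, by simp [hk]⟩
      · refine ⟨fun i => if 0 ≤ y (k - 1) i then 1 else 0, fun i => ?_, by rw [if_neg hk]; rfl⟩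
        by_cases h : 0 ≤ y (k - 1) i <;> simp [h]
    rw [hPk]
    have hM := mmat_step hT hp01
    have hU := mmat_isUnit hM
    refine ⟨hM, hU, ?_⟩
    have hx : y (k + 1 - 1)
        = F (if k = 0 then (0 : Matrix (Fin n) (Fin n) ℝ) else Pmat (y (k - 1))) := by
      cases k with
      | zero => rfl
      | succ k' => rfl
    rw [hx, hPk]
    show (1 - Matrix.diagonal p + T * Matrix.diagonal p) *ᵥ
      ((1 - Matrix.diagonal p + T * Matrix.diagonal p)⁻¹ *ᵥ b) = b
    rw [Matrix.mulVec_mulVec, Matrix.mul_nonsing_inv _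
      ((Matrix.isUnit_iff_isUnit_det _).1 hU), Matrix.one_mulVec]
end

section
/- Let T be an n×n real M-matrix (or an irreducible matrix satisfying condition T2 together with vᵀb ≤ 0), and consider the iteration P⁰ = O, (I − Pᵏ + T·Pᵏ)·x^{k+1} = b, Pᵏ = P(xᵏ) for k ≥ 1. Then the projection matrices are monotonically nondecreasing: P^{k+1} ≥ Pᵏ ≥ O entrywise for all k = 0, 1, 2, … -/
open Matrix

attribute [local instance] Matrix.linftyOpNormedRing Matrix.linftyOpNormedAlgebra


/-- Z-matrix with a positive vector mapped to a positive vector: monotone & invertible. -/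
lemma zlemma {n : ℕ} (M : Matrix (Fin n) (Fin n) ℝ)
    (hz : ∀ i j, i ≠ j → M i j ≤ 0) (u : Fin n → ℝ) (hu : ∀ i, 0 < u i)
    (hMu : ∀ i, 0 < (M *ᵥ u) i) :
    (∀ y : Fin n → ℝ, (∀ i, 0 ≤ (M *ᵥ y) i) → ∀ i, 0 ≤ y i) ∧ IsUnit M.det := by
  have mono : ∀ y : Fin n → ℝ, (∀ i, 0 ≤ (M *ᵥ y) i) → ∀ i, 0 ≤ y i := by
    intro y hy i
    by_contra hyi
    push_neg at hyi
    obtain ⟨m, -, hm⟩ :=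
      Finset.exists_min_image Finset.univ (fun j => y j / u j) ⟨i, Finset.mem_univ i⟩
    set t := y m / u m with ht
    have htneg : t < 0 := by
      have h1 : y m / u m ≤ y i / u i := hm i (Finset.mem_univ i)
      have h2 : y i / u i < 0 := div_neg_of_neg_of_pos hyi (hu i)
      linarith
    have hstep : ∀ j, M m j * y j ≤ t * (M m j * u j) := by
      intro j
      by_cases hj : j = m
      · subst hj
        have hne : u j ≠ 0 := ne_of_gt (hu j)
        have : y j = t * u j := by
          rw [ht]; field_simp
        rw [this]; ring_nf; exact le_refl _
      · have h1 : t * u j ≤ y j := by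
          have := hm j (Finset.mem_univ j)
          rw [ht, div_le_div_iff₀ (hu m) (hu j)] at this
          calc t * u j = y m / u m * u j := rfl
          _ ≤ y j := by
            rw [div_mul_eq_mul_div, div_le_iff₀ (hu m)]
            linarith [this]
        have h2 : M m j ≤ 0 := hz m j (by simpa [eq_comm] using hj)
        calc M m j * y j ≤ M m j * (t * u j) := by
              exact mul_le_mul_of_nonpos_left h1 h2
        _ = t * (M m j * u j) := by ring
    have hsum : (M *ᵥ y) m ≤ t * (M *ᵥ u) m := by
      have : (M *ᵥ y) m = ∑ j, M m j * y j := rfl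
      rw [this]
      have : t * (M *ᵥ u) m = ∑ j, t * (M m j * u j) := by
        rw [Matrix.mulVec, dotProduct, Finset.mul_sum]
      rw [this]
      exact Finset.sum_le_sum fun j _ => hstep j
    have : t * (M *ᵥ u) m < 0 := mul_neg_of_neg_of_pos htneg (hMu m)
    linarith [hy m]
  refine ⟨mono, ?_⟩
  by_contra hdet
  rw [isUnit_iff_ne_zero, not_not] at hdet
  obtain ⟨y, hy0, hMy⟩ := (Matrix.exists_mulVec_eq_zero_iff).mpr hdet
  have h1 : ∀ i, 0 ≤ y i := mono y (by simp [hMy])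
  have h2 : ∀ i, 0 ≤ (-y) i := by
    apply mono
    intro i
    simp [Matrix.mulVec_neg, hMy]
  apply hy0
  funext i
  have := h1 i; have := h2 i; simp at this ⊢; linarith

lemma mmat_offdiag {n : ℕ} {T : Matrix (Fin n) (Fin n) ℝ} (hT : IsMmat T) :
    ∀ i j, i ≠ j → T i j ≤ 0 := by
  obtain ⟨α, B, hB, -, rfl⟩ := hT
  intro i j hij
  simp [Matrix.sub_apply, Matrix.smul_apply, Matrix.one_apply_ne hij, hB i j]


/-- From a positive vector for `T`, build one for `1 - diagonal p + T * diagonal p`. -/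
lemma step_u {n : ℕ} (T : Matrix (Fin n) (Fin n) ℝ)
    (hz : ∀ i j, i ≠ j → T i j ≤ 0) (u₀ : Fin n → ℝ) (hu₀ : ∀ i, 0 < u₀ i)
    (hTu₀ : ∀ i, 0 < (T *ᵥ u₀) i) (p : Fin n → ℝ) (hp : ∀ i, p i = 0 ∨ p i = 1) :
    ∃ u : Fin n → ℝ, (∀ i, 0 < u i) ∧
      ∀ i, 0 < ((1 - Matrix.diagonal p + T * Matrix.diagonal p) *ᵥ u) i := by
  classical
  set w : Fin n → ℝ := fun j => p j * u₀ j with hw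
  set K : ℝ := (∑ i, |(T *ᵥ w) i|) + 1 with hK
  have hKpos : 0 < K := by
    have : 0 ≤ ∑ i, |(T *ᵥ w) i| := Finset.sum_nonneg fun i _ => abs_nonneg _
    linarith
  have hKge : ∀ i, |(T *ᵥ w) i| ≤ K - 1 := by
    intro i
    have := Finset.single_le_sum (f := fun i => |(T *ᵥ w) i|)
      (fun i _ => abs_nonneg _) (Finset.mem_univ i)
    simp [hK]; linarith
  refine ⟨fun i => if p i = 1 then u₀ i else K, ?_, ?_⟩
  · intro i
    by_cases h : p i = 1 <;> simp [h, hu₀ i, hKpos]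
  · intro i
    set u : Fin n → ℝ := fun i => if p i = 1 then u₀ i else K with hu
    have hdiag : Matrix.diagonal p *ᵥ u = w := by
      funext j
      rcases hp j with h | h <;> simp [Matrix.mulVec_diagonal, hu, hw, h]
    have hMu : ((1 - Matrix.diagonal p + T * Matrix.diagonal p) *ᵥ u) i
        = u i - p i * u i + (T *ᵥ w) i := by
      rw [Matrix.add_mulVec, Matrix.sub_mulVec, ← Matrix.mulVec_mulVec, hdiag,
        Matrix.one_mulVec]
      rcases hp i with h | h <;> simp [hw, hu, h]
    rw [hMu]
    rcases hp i with h | h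
    · have h1 : -(K - 1) ≤ (T *ᵥ w) i := neg_le_of_abs_le (hKge i)
      simp [hu, h]
      linarith
    · -- p i = 1 : value is (T *ᵥ w) i, show (T *ᵥ u₀) i ≤ (T *ᵥ w) i
      have hle : (T *ᵥ u₀) i ≤ (T *ᵥ w) i := by
        have : ∀ j, T i j * u₀ j ≤ T i j * w j := by
          intro j
          rcases hp j with hj | hj
          · have hij : i ≠ j := by intro e; rw [← e, h] at hj; norm_num at hj
            have := mul_nonpos_iff.mpr (Or.inr ⟨hz i j hij, le_of_lt (hu₀ j)⟩)
            simp [hw, hj]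
            linarith
          · simp [hw, hj]
        simp only [Matrix.mulVec, dotProduct]
        exact Finset.sum_le_sum fun j _ => this j
      simp [hu, h]
      have := hTu₀ i
      linarith


/-- An M-matrix admits a positive vector with positive image. -/
lemma mmat_pos_vec {n : ℕ} (T : Matrix (Fin n) (Fin n) ℝ) (hT : IsMmat T) :
    ∃ u : Fin n → ℝ, (∀ i, 0 < u i) ∧ ∀ i, 0 < (T *ᵥ u) i := by
  classical
  rcases isEmpty_or_nonempty (Fin n) with hn | hn
  · exact ⟨fun _ => 1, fun i => hn.elim i, fun i => hn.elim i⟩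
  obtain ⟨α, B, hB, hρ, rfl⟩ := hT
  haveI : Nontrivial (Matrix (Fin n) (Fin n) ℂ) := Matrix.nonempty
  haveI : CompleteSpace (Matrix (Fin n) (Fin n) ℂ) := FiniteDimensional.complete ℂ _
  set Bc : Matrix (Fin n) (Fin n) ℂ := B.map (fun a => (a : ℂ)) with hBc
  set S : Set ℝ := {r : ℝ | ∃ μ ∈ spectrum ℂ Bc, r = ‖μ‖} with hS
  have hspec : specRad B = sSup S := rfl
  have hS_bdd : BddAbove S := by
    have h1 : S = (fun μ : ℂ => ‖μ‖) '' spectrum ℂ Bc := by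
      ext r
      simp only [hS, Set.mem_setOf_eq, Set.mem_image]
      constructor
      · rintro ⟨μ, hμ, rfl⟩; exact ⟨μ, hμ, rfl⟩
      · rintro ⟨μ, hμ, rfl⟩; exact ⟨μ, hμ, rfl⟩
    rw [h1]
    exact ((spectrum.isCompact Bc).image continuous_norm).bddAbove
  have hbound : ∀ μ ∈ spectrum ℂ Bc, ‖μ‖ ≤ specRad B := by
    intro μ hμ
    rw [hspec]
    exact le_csSup hS_bdd ⟨μ, hμ, rfl⟩
  have hα : 0 < α := by
    obtain ⟨μ₀, hμ₀⟩ := spectrum.nonempty Bc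
    have := hbound μ₀ hμ₀
    have h0 := norm_nonneg μ₀
    linarith
  -- the scaled matrix
  set Cr : Matrix (Fin n) (Fin n) ℝ := α⁻¹ • B with hCr
  set Cc : Matrix (Fin n) (Fin n) ℂ := (α⁻¹ : ℂ) • Bc with hCc
  have hαC : ((α : ℂ)) • Cc = Bc := by
    rw [hCc, smul_smul]
    rw [mul_inv_cancel₀ (by exact_mod_cast ne_of_gt hα)]
    simp
  have hsr : spectralRadius ℂ Cc < 1 := by
    have h1 : spectralRadius ℂ Cc < (1 : NNReal) := by
      apply spectrum.spectralRadius_lt_of_forall_lt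
      intro μ hμ
      have hmem : (α : ℂ) * μ ∈ spectrum ℂ Bc := by
        rw [← hαC, spectrum.smul_eq_smul (α : ℂ) Cc (spectrum.nonempty Cc)]
        exact ⟨μ, hμ, rfl⟩
      have h2 := hbound _ hmem
      rw [norm_mul] at h2
      have h3 : ‖(α : ℂ)‖ = α := by
        rw [Complex.norm_real, Real.norm_eq_abs, abs_of_pos hα]
      rw [h3] at h2
      have h4 : ‖μ‖ < 1 := by
        nlinarith [norm_nonneg μ]
      have : ‖μ‖₊ < (1 : NNReal) := by
        rw [← NNReal.coe_lt_coe]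
        simpa using h4
      exact_mod_cast this
    simpa using h1
  -- Gelfand: get N with ‖Cc ^ N‖ < 1, N ≥ 1
  have hten := spectrum.pow_nnnorm_pow_one_div_tendsto_nhds_spectralRadius Cc
  have hev : ∀ᶠ k : ℕ in Filter.atTop, ((‖Cc ^ k‖₊ : ENNReal) ^ (1 / (k : ℝ))) < 1 := by
    apply hten.eventually_lt_const
    simpa using hsr
  obtain ⟨N₀, hN₀⟩ := (hev.and (Filter.eventually_ge_atTop 1)).exists
  obtain ⟨hlt, hN1⟩ := hN₀
  have hnorm : ‖Cc ^ N₀‖₊ < 1 := by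
    by_contra h
    push_neg at h
    have : (1 : ENNReal) ≤ ((‖Cc ^ N₀‖₊ : ENNReal) ^ (1 / (N₀ : ℝ))) := by
      calc (1 : ENNReal) = 1 ^ (1 / (N₀ : ℝ)) := by rw [ENNReal.one_rpow]
      _ ≤ _ := by
        apply ENNReal.rpow_le_rpow _ (by positivity)
        exact_mod_cast h
    exact absurd hlt (not_lt.mpr this)
  -- real scaled matrix facts
  have hCr0 : ∀ i j, 0 ≤ Cr i j := by
    intro i j
    rw [hCr]
    exact mul_nonneg (inv_nonneg.mpr (le_of_lt hα)) (hB i j)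
  have hpow0 : ∀ m i j, 0 ≤ (Cr ^ m) i j := by
    intro m
    induction m with
    | zero => intro i j; rw [pow_zero]; by_cases h : i = j <;> simp [Matrix.one_apply, h]
    | succ m ih =>
      intro i j
      rw [pow_succ, Matrix.mul_apply]
      exact Finset.sum_nonneg fun k _ => mul_nonneg (ih i k) (hCr0 k j)
  have hmapC : Cr.map (fun a => (a : ℂ)) = Cc := by
    funext i j
    simp only [hCr, hCc, hBc, Matrix.map_apply, Matrix.smul_apply, smul_eq_mul]
    push_cast
    ring
  have hmap : ∀ m : ℕ, (Cr ^ m).map (fun a => (a : ℂ)) = Cc ^ m := by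
    intro m
    have hco : (fun a : ℝ => (a : ℂ)) = ⇑(algebraMap ℝ ℂ) := by
      funext a; simp
    rw [hco, ← RingHom.mapMatrix_apply, map_pow, RingHom.mapMatrix_apply, ← hco, hmapC]
  have hrowsum : ∀ i, ∑ j, (Cr ^ N₀) i j < 1 := by
    intro i
    have h1 : (∑ j, ‖(Cc ^ N₀) i j‖₊) ≤ ‖Cc ^ N₀‖₊ := by
      rw [Matrix.linfty_opNNNorm_def]
      exact Finset.le_sup (f := fun i => ∑ j, ‖(Cc ^ N₀) i j‖₊) (Finset.mem_univ i)
    have h2 : ∑ j, (Cr ^ N₀) i j = ((∑ j, ‖(Cc ^ N₀) i j‖₊ : NNReal) : ℝ) := by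
      push_cast
      apply Finset.sum_congr rfl
      intro j _
      rw [← hmap N₀]
      simp only [Matrix.map_apply, Complex.norm_real, Real.norm_eq_abs,
        abs_of_nonneg (hpow0 N₀ i j)]
    rw [h2]
    have h3 : ((∑ j, ‖(Cc ^ N₀) i j‖₊ : NNReal) : ℝ) ≤ ((‖Cc ^ N₀‖₊ : NNReal) : ℝ) := by
      exact_mod_cast h1
    have h4 : ((‖Cc ^ N₀‖₊ : NNReal) : ℝ) < 1 := by exact_mod_cast hnorm
    linarith
  -- define u as partial geometric sum applied to 1
  set f : ℕ → (Fin n → ℝ) := fun m => (Cr ^ m) *ᵥ (fun _ => 1) with hf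
  set u : Fin n → ℝ := ∑ m ∈ Finset.range N₀, f m with hu
  have hf0 : ∀ m i, 0 ≤ f m i := by
    intro m i
    simp only [hf, Matrix.mulVec, dotProduct]
    exact Finset.sum_nonneg fun j _ => mul_nonneg (hpow0 m i j) (by norm_num)
  have hu1 : ∀ i, 1 ≤ u i := by
    intro i
    have h0 : f 0 i = 1 := by simp [hf, Matrix.one_mulVec]
    have : f 0 i ≤ u i := by
      rw [hu]
      have := Finset.single_le_sum (f := fun m => f m i)
        (fun m _ => hf0 m i) (Finset.mem_range.mpr (lt_of_lt_of_le Nat.zero_lt_one hN1))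
      simpa using this
    linarith
  have hCru : Cr *ᵥ u = ∑ m ∈ Finset.range N₀, f (m + 1) := by
    rw [hu]
    have h1 : Cr *ᵥ (∑ m ∈ Finset.range N₀, f m)
        = ∑ m ∈ Finset.range N₀, Cr *ᵥ f m := by
      rw [← Matrix.mulVecLin_apply, map_sum]
      simp [Matrix.mulVecLin_apply]
    rw [h1]
    apply Finset.sum_congr rfl
    intro m _
    rw [hf, Matrix.mulVec_mulVec, ← pow_succ']
  have htel : u - Cr *ᵥ u = f 0 - f N₀ := by
    rw [hCru, hu, ← Finset.sum_sub_distrib]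
    exact Finset.sum_range_sub' f N₀
  have hTform : α • (1 : Matrix (Fin n) (Fin n) ℝ) - B = α • (1 - Cr) := by
    rw [smul_sub, hCr, smul_smul, mul_inv_cancel₀ (ne_of_gt hα), one_smul]
  refine ⟨u, ?_, ?_⟩
  · intro i; linarith [hu1 i]
  · intro i
    rw [hTform, Matrix.smul_mulVec]
    have h5 : ((1 - Cr) *ᵥ u) i = (f 0 - f N₀) i := by
      rw [Matrix.sub_mulVec, Matrix.one_mulVec, ← htel]
    have h6 : f 0 i = 1 := by simp [hf, Matrix.one_mulVec]
    have h7 : f N₀ i < 1 := by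
      have he : f N₀ i = ∑ j, (Cr ^ N₀) i j := by
        simp [hf, Matrix.mulVec, dotProduct]
      rw [he]
      exact hrowsum i
    have : 0 < ((1 - Cr) *ᵥ u) i := by
      rw [h5]
      simp only [Pi.sub_apply]
      linarith
    simp only [Pi.smul_apply, smul_eq_mul]
    positivity

/-- Core one-step comparison lemma. -/
lemma core {n : ℕ} (T : Matrix (Fin n) (Fin n) ℝ)
    (hz : ∀ i j, i ≠ j → T i j ≤ 0) (x b q : Fin n → ℝ)
    (hq : ∀ i, q i = 0 ∨ (q i = 1 ∧ 0 ≤ x i))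
    (hx : (1 - Matrix.diagonal q + T * Matrix.diagonal q) *ᵥ x = b)
    (u : Fin n → ℝ) (hu : ∀ i, 0 < u i)
    (hMu : ∀ i, 0 < ((1 - Pmat x + T * Pmat x) *ᵥ u) i) :
    ∀ i, 0 ≤ x i → 0 ≤ ((1 - Pmat x + T * Pmat x)⁻¹ *ᵥ b) i := by
  classical
  set p : Fin n → ℝ := fun i => if 0 ≤ x i then 1 else 0 with hp
  have hPmat : Pmat x = Matrix.diagonal p := rfl
  set M : Matrix (Fin n) (Fin n) ℝ := 1 - Pmat x + T * Pmat x with hM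
  have hzM : ∀ i j, i ≠ j → M i j ≤ 0 := by
    intro i j hij
    have h1 : (1 : Matrix (Fin n) (Fin n) ℝ) i j = 0 := Matrix.one_apply_ne hij
    have h2 : Pmat x i j = 0 := Matrix.diagonal_apply_ne _ hij
    have h3 : (T * Pmat x) i j = T i j * p j := by
      rw [hPmat, Matrix.mul_diagonal]
    have h4 : 0 ≤ p j := by rw [hp]; by_cases h : 0 ≤ x j <;> simp [h]
    simp only [hM, Matrix.add_apply, Matrix.sub_apply, h1, h2, h3]
    have := mul_nonpos_iff.mpr (Or.inr ⟨hz i j hij, h4⟩)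
    linarith
  obtain ⟨mono, hdet⟩ := zlemma M hzM u hu hMu
  -- z = Q x
  set z : Fin n → ℝ := fun i => q i * x i with hzv
  have hz0 : ∀ i, 0 ≤ z i := by
    intro i
    rcases hq i with h | ⟨h1, h2⟩
    · simp [hzv, h]
    · simpa [hzv, h1] using h2
  have hqp : ∀ i, q i = 1 → p i = 1 := by
    intro i h
    rcases hq i with h' | ⟨-, h2⟩
    · rw [h'] at h; norm_num at h
    · simp [hp, h2]
  have hpz : ∀ i, p i * z i = z i := by
    intro i
    rcases hq i with h | ⟨h1, -⟩
    · simp [hzv, h]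
    · rw [hqp i h1]; ring
  have hdiagz : Matrix.diagonal p *ᵥ z = z := by
    funext i; rw [Matrix.mulVec_diagonal]; exact hpz i
  have key1 : M *ᵥ z = T *ᵥ z := by
    rw [hM, Matrix.add_mulVec, Matrix.sub_mulVec, Matrix.one_mulVec, hPmat,
      ← Matrix.mulVec_mulVec, hdiagz]
    funext i
    simp [Matrix.mulVec_diagonal, hpz i]
  have hdiagx : Matrix.diagonal q *ᵥ x = z := by
    funext i; rw [Matrix.mulVec_diagonal]
  have key2 : ∀ i, b i = (1 - q i) * x i + (T *ᵥ z) i := by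
    intro i
    rw [← hx, Matrix.add_mulVec, Matrix.sub_mulVec, Matrix.one_mulVec,
      ← Matrix.mulVec_mulVec, hdiagx]
    simp [Matrix.mulVec_diagonal, hzv]
    ring
  set c : Fin n → ℝ := fun i => if 0 ≤ x i then b i else (T *ᵥ z) i with hc
  have hMzc : ∀ i, (M *ᵥ z) i ≤ c i := by
    intro i
    rw [key1]
    by_cases h : 0 ≤ x i
    · have := key2 i
      have hq1 : 0 ≤ (1 - q i) * x i := by
        rcases hq i with h' | ⟨h', -⟩ <;> rw [h'] <;> [skip; ring_nf] <;> simp [h]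
      simp [hc, h]
      linarith
    · simp [hc, h]
  have hcb : ∀ i, ¬ (0 ≤ x i) → c i - b i = - x i := by
    intro i h
    have hqi : q i = 0 := by
      rcases hq i with h' | ⟨-, h2⟩
      · exact h'
      · exact absurd h2 h
    have := key2 i
    simp [hc, h]
    rw [this, hqi]
    ring
  have hcb0 : ∀ i, 0 ≤ x i → c i - b i = 0 := by
    intro i h; simp [hc, h]
  -- y' := M⁻¹ c ≥ z
  have hMinvM : M⁻¹ * M = 1 := Matrix.nonsing_inv_mul M hdet
  have hMMinv : M * M⁻¹ = 1 := Matrix.mul_nonsing_inv M hdet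
  have hy' : ∀ i, z i ≤ (M⁻¹ *ᵥ c) i := by
    have h1 : ∀ i, 0 ≤ (M *ᵥ (M⁻¹ *ᵥ c - z)) i := by
      intro i
      rw [Matrix.mulVec_sub, Matrix.mulVec_mulVec, hMMinv, Matrix.one_mulVec]
      have := hMzc i
      simp only [Pi.sub_apply]
      linarith
    intro i
    have := mono _ h1 i
    simp only [Pi.sub_apply] at this
    linarith
  -- columns of M⁻¹ at negative indices are standard basis vectors
  have hcol : ∀ j, ¬ (0 ≤ x j) → ∀ i, i ≠ j → M⁻¹ i j = 0 := by
    intro j hj i hij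
    have hpj : p j = 0 := by simp [hp, hj]
    have hMcol : M *ᵥ Pi.single j 1 = Pi.single j 1 := by
      funext i'
      rw [Matrix.mulVec_single_one, Matrix.col_apply]
      simp only [hM, Matrix.add_apply, Matrix.sub_apply]
      have h3 : (T * Pmat x) i' j = T i' j * p j := by rw [hPmat, Matrix.mul_diagonal]
      have h2 : Pmat x i' j = (Matrix.diagonal p) i' j := by rw [hPmat]
      rw [h3, hpj]
      by_cases h : i' = j
      · subst h
        rw [h2, Matrix.diagonal_apply_eq]
        simp [hpj, Matrix.one_apply]
      · simp [Matrix.one_apply_ne h, Matrix.diagonal_apply_ne _ h, h2, hpj,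
          Pi.single_eq_of_ne h]
    have : M⁻¹ *ᵥ Pi.single j 1 = Pi.single j 1 := by
      conv_lhs => rw [← hMcol]
      rw [Matrix.mulVec_mulVec, hMinvM, Matrix.one_mulVec]
    have h4 := congrFun this i
    rw [Matrix.mulVec_single_one, Matrix.col_apply] at h4
    simpa [Pi.single_eq_of_ne hij] using h4
  intro i hxi
  have heq : (M⁻¹ *ᵥ b) i = (M⁻¹ *ᵥ c) i := by
    have : (M⁻¹ *ᵥ c) i - (M⁻¹ *ᵥ b) i = (M⁻¹ *ᵥ (c - b)) i := by
      rw [Matrix.mulVec_sub]; simp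
    have hzero : (M⁻¹ *ᵥ (c - b)) i = 0 := by
      rw [Matrix.mulVec, dotProduct]
      apply Finset.sum_eq_zero
      intro j _
      by_cases hj : 0 ≤ x j
      · rw [Pi.sub_apply, hcb0 j hj]; ring
      · have hij : i ≠ j := by intro e; rw [← e] at hj; exact hj hxi
        rw [hcol j hj i hij]; ring
    linarith [this, hzero]
  rw [heq]
  exact le_trans (hz0 i) (hy' i)


lemma zoff {n : ℕ} (Tm : Matrix (Fin n) (Fin n) ℝ)
    (hz : ∀ i j, i ≠ j → Tm i j ≤ 0) (q : Fin n → ℝ) (hq0 : ∀ i, 0 ≤ q i) :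
    ∀ i j, i ≠ j → (1 - Matrix.diagonal q + Tm * Matrix.diagonal q) i j ≤ 0 := by
  intro i j hij
  have h1 : (1 : Matrix (Fin n) (Fin n) ℝ) i j = 0 := Matrix.one_apply_ne hij
  have h2 : Matrix.diagonal q i j = 0 := Matrix.diagonal_apply_ne _ hij
  have h3 : (Tm * Matrix.diagonal q) i j = Tm i j * q j := by rw [Matrix.mul_diagonal]
  simp only [Matrix.add_apply, Matrix.sub_apply, h1, h2, h3]
  have := mul_nonpos_iff.mpr (Or.inr ⟨hz i j hij, hq0 j⟩)
  linarith

lemma mmat_step_s9 {n : ℕ} (Tm : Matrix (Fin n) (Fin n) ℝ) (hTm : IsMmat Tm)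
    (q : Fin n → ℝ) (hq01 : ∀ i, q i = 0 ∨ q i = 1) :
    IsUnit (1 - Matrix.diagonal q + Tm * Matrix.diagonal q).det := by
  obtain ⟨u₀, hu₀, hTu₀⟩ := mmat_pos_vec Tm hTm
  obtain ⟨u, hu, hMu⟩ := step_u Tm (mmat_offdiag hTm) u₀ hu₀ hTu₀ q hq01
  have hq0 : ∀ i, 0 ≤ q i := fun i => by rcases hq01 i with h | h <;> simp [h]
  exact (zlemma _ (zoff Tm (mmat_offdiag hTm) q hq0) u hu hMu).2

/-- The engine: one step of monotonicity. -/
lemma engine {n : ℕ} (T : Matrix (Fin n) (Fin n) ℝ) (v w b : Fin n → ℝ)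
    (hT : IsMmat T ∨ (CondT2 T v w ∧ v ⬝ᵥ b ≤ 0))
    (q xk : Fin n → ℝ) (hq01 : ∀ i, q i = 0 ∨ q i = 1)
    (hqx : ∀ i, q i = 1 → 0 ≤ xk i)
    (hxk : xk = (1 - Matrix.diagonal q + T * Matrix.diagonal q)⁻¹ *ᵥ b) :
    ∀ i, 0 ≤ xk i → 0 ≤ ((1 - Pmat xk + T * Pmat xk)⁻¹ *ᵥ b) i := by
  classical
  set p : Fin n → ℝ := fun i => if 0 ≤ xk i then 1 else 0 with hpdef
  have hPmat : Pmat xk = Matrix.diagonal p := rfl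
  have hp01 : ∀ i, p i = 0 ∨ p i = 1 := by
    intro i; by_cases h : 0 ≤ xk i <;> simp [hpdef, h]
  have hq' : ∀ i, q i = 0 ∨ (q i = 1 ∧ 0 ≤ xk i) :=
    fun i => (hq01 i).imp id (fun h => ⟨h, hqx i h⟩)
  rcases hT with hM | ⟨⟨hirr, hv, hw, hkerT', hkerT, hMm⟩, hvb⟩
  · -- M-matrix case
    have hz := mmat_offdiag hM
    have hdet := mmat_step_s9 T hM q hq01
    have heq : (1 - Matrix.diagonal q + T * Matrix.diagonal q) *ᵥ xk = b := by
      rw [hxk, Matrix.mulVec_mulVec, Matrix.mul_nonsing_inv _ hdet, Matrix.one_mulVec]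
    obtain ⟨u₀, hu₀, hTu₀⟩ := mmat_pos_vec T hM
    obtain ⟨u, hu, hMu⟩ := step_u T hz u₀ hu₀ hTu₀ p hp01
    exact core T hz xk b q hq' heq u hu (by rw [hPmat]; exact hMu)
  · -- condition T2 case
    intro i hxi
    have hz : ∀ a c, a ≠ c → T a c ≤ 0 := by
      intro a c hac
      have h1 : IsMmat (T + Matrix.diagonal (fun _ => (1:ℝ))) := by
        apply hMm _ (fun _ => zero_le_one)
        intro h
        have := congrFun h i
        norm_num at this
      have := mmat_offdiag h1 a c hac
      simpa [Matrix.add_apply, Matrix.diagonal_apply_ne _ hac, Matrix.one_apply_ne hac] using this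
    have hTw : T *ᵥ w = 0 := by
      have hmem : w ∈ LinearMap.ker (Matrix.mulVecLin T) := by
        rw [hkerT]; exact Submodule.mem_span_singleton_self w
      simpa [Matrix.mulVecLin_apply] using hmem
    have hwne : w ≠ 0 := by
      intro h
      have := congrFun h i
      have := hw i
      simp_all
    have hdetT : T.det = 0 := Matrix.exists_mulVec_eq_zero_iff.mp ⟨w, hwne, hTw⟩
    have hTinv : T⁻¹ = 0 :=
      Matrix.nonsing_inv_apply_not_isUnit _ (by simp [hdetT])
    by_cases hall : ∀ j, 0 ≤ xk j
    · -- all nonnegative: Pmat xk = 1, matrix is the singular T, inverse is junk 0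
      have hP1 : Pmat xk = 1 := by
        rw [hPmat, show p = fun _ => (1:ℝ) from funext fun j => if_pos (hall j),
          Matrix.diagonal_one]
      rw [hP1, show (1 : Matrix (Fin n) (Fin n) ℝ) - 1 + T * 1 = T by simp, hTinv,
        Matrix.zero_mulVec]
      exact le_refl 0
    · push_neg at hall
      obtain ⟨j₀, hj₀⟩ := hall
      -- the equation for xk
      have heq : (1 - Matrix.diagonal q + T * Matrix.diagonal q) *ᵥ xk = b := by
        by_cases hqall : ∀ m, q m = 1
        · exfalso
          have hdq : Matrix.diagonal q = 1 := by
            rw [show q = fun _ => (1:ℝ) from funext hqall, Matrix.diagonal_one]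
          rw [hdq, show (1 : Matrix (Fin n) (Fin n) ℝ) - 1 + T * 1 = T by simp, hTinv,
            Matrix.zero_mulVec] at hxk
          rw [hxk] at hj₀
          exact absurd hj₀ (by norm_num)
        · push_neg at hqall
          obtain ⟨m₀, hm₀⟩ := hqall
          have hqm0 : q m₀ = 0 := (hq01 m₀).resolve_right hm₀
          have hT'' : IsMmat (T + Matrix.diagonal (fun i => 1 - q i)) := by
            apply hMm _ (fun i => by rcases hq01 i with h | h <;> simp [h])
            intro h
            have := congrFun h m₀
            simp [hqm0] at this
          have hdd : Matrix.diagonal (fun i => 1 - q i) * Matrix.diagonal q = 0 := by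
            rw [Matrix.diagonal_mul_diagonal,
              show (fun i => (1 - q i) * q i) = fun _ => (0:ℝ) from
                funext fun i => by rcases hq01 i with h | h <;> simp [h],
              Matrix.diagonal_zero]
          have hdet : IsUnit (1 - Matrix.diagonal q + T * Matrix.diagonal q).det := by
            have := mmat_step_s9 _ hT'' q hq01
            rwa [Matrix.add_mul, hdd, add_zero] at this
          rw [hxk, Matrix.mulVec_mulVec, Matrix.mul_nonsing_inv _ hdet, Matrix.one_mulVec]
      -- the shifted matrix T' = T + diagonal d
      set d : Fin n → ℝ := fun i => if 0 ≤ xk i then 0 else 1 with hd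
      have hT' : IsMmat (T + Matrix.diagonal d) := by
        apply hMm _ (fun i => by by_cases h : 0 ≤ xk i <;> simp [hd, h])
        intro h
        have := congrFun h j₀
        simp [hd, not_le.mpr hj₀] at this
      have hdq0 : Matrix.diagonal d * Matrix.diagonal q = 0 := by
        rw [Matrix.diagonal_mul_diagonal,
          show (fun i => d i * q i) = fun _ => (0:ℝ) from funext fun i => by
            rcases hq' i with h | ⟨h1, h2⟩
            · simp [h]
            · simp [hd, h2],
          Matrix.diagonal_zero]
      have heq' : (1 - Matrix.diagonal q + (T + Matrix.diagonal d) * Matrix.diagonal q) *ᵥ xk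
          = b := by
        rw [Matrix.add_mul, hdq0, add_zero]; exact heq
      obtain ⟨u₀, hu₀, hTu₀⟩ := mmat_pos_vec _ hT'
      obtain ⟨u, hu, hMu⟩ := step_u (T + Matrix.diagonal d) (mmat_offdiag hT') u₀ hu₀ hTu₀ p hp01
      have hdP : Matrix.diagonal d * Matrix.diagonal p = 0 := by
        rw [Matrix.diagonal_mul_diagonal,
          show (fun i => d i * p i) = fun _ => (0:ℝ) from funext fun i => by
            by_cases h : 0 ≤ xk i <;> simp [hd, hpdef, h],
          Matrix.diagonal_zero]
      have hMeq : 1 - Pmat xk + (T + Matrix.diagonal d) * Pmat xk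
          = 1 - Pmat xk + T * Pmat xk := by
        rw [hPmat, Matrix.add_mul, hdP, add_zero]
      have hcore := core (T + Matrix.diagonal d) (mmat_offdiag hT') xk b q hq' heq' u hu
        (by rw [hPmat]; exact hMu)
      have := hcore i hxi
      rwa [hMeq] at this

/-- If `T` is an M-matrix, or irreducible satisfying condition T2 with
`vᵀb ≤ 0`, then along the iteration `P⁰ = O`, `x^{k+1} = (I − Pᵏ + T·Pᵏ)⁻¹·b`,
`Pᵏ = P(xᵏ)` for `k ≥ 1`, the projection matrices are monotonically nondecreasing:
`P^{k+1} ≥ Pᵏ ≥ O` entrywise for all `k`. -/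

theorem stmt9 {n : ℕ} (T : Matrix (Fin n) (Fin n) ℝ) (v w b : Fin n → ℝ)
    (hT : IsMmat T ∨ (CondT2 T v w ∧ v ⬝ᵥ b ≤ 0))
    (x : ℕ → Fin n → ℝ) (P : ℕ → Matrix (Fin n) (Fin n) ℝ)
    (hP0 : P 0 = 0) (hPk : ∀ k, 1 ≤ k → P k = Pmat (x k))
    (hit : ∀ k, x (k + 1) = (1 - P k + T * P k)⁻¹ *ᵥ b) :
    ∀ k, (∀ i j, P k i j ≤ P (k + 1) i j) ∧ (∀ i j, 0 ≤ P k i j) := by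
  classical
  have hPent : ∀ y : Fin n → ℝ, ∀ i j, 0 ≤ Pmat y i j := by
    intro y i j
    by_cases h : i = j
    · subst h
      rw [show Pmat y i i = if 0 ≤ y i then 1 else 0 from Matrix.diagonal_apply_eq _ i]
      by_cases h' : 0 ≤ y i <;> simp [h']
    · rw [show Pmat y i j = 0 from Matrix.diagonal_apply_ne _ h]
  have key : ∀ k, 1 ≤ k → ∀ i, 0 ≤ x k i → 0 ≤ x (k + 1) i := by
    intro k hk
    induction k, hk using Nat.le_induction with
    | base =>
      have hx1 : x 1 = (1 - Matrix.diagonal (fun _ : Fin n => (0:ℝ))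
          + T * Matrix.diagonal (fun _ : Fin n => (0:ℝ)))⁻¹ *ᵥ b := by
        rw [Matrix.diagonal_zero]
        have := hit 0
        rwa [hP0] at this
      have h := engine T v w b hT (fun _ => 0) (x 1) (fun i => Or.inl rfl)
        (fun i h => by norm_num at h) hx1
      intro i hi
      have hx2 : x 2 = (1 - Pmat (x 1) + T * Pmat (x 1))⁻¹ *ᵥ b := by
        have := hit 1
        rwa [hPk 1 le_rfl] at this
      rw [hx2]
      exact h i hi
    | succ k hk ih =>
      set q : Fin n → ℝ := fun i => if 0 ≤ x k i then 1 else 0 with hq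
      have hPq : P k = Matrix.diagonal q := hPk k hk
      have hq01 : ∀ i, q i = 0 ∨ q i = 1 := by
        intro i; by_cases h : 0 ≤ x k i <;> simp [hq, h]
      have hqx : ∀ i, q i = 1 → 0 ≤ x (k + 1) i := by
        intro i h
        by_cases h' : 0 ≤ x k i
        · exact ih i h'
        · simp [hq, h'] at h
      have hxk1 : x (k + 1) = (1 - Matrix.diagonal q + T * Matrix.diagonal q)⁻¹ *ᵥ b := by
        have := hit k
        rwa [hPq] at this
      have h := engine T v w b hT q (x (k + 1)) hq01 hqx hxk1
      intro i hi
      have hx2 : x (k + 2) = (1 - Pmat (x (k + 1)) + T * Pmat (x (k + 1)))⁻¹ *ᵥ b := by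
        have := hit (k + 1)
        rwa [hPk (k + 1) (by omega)] at this
      rw [hx2]
      exact h i hi
  intro k
  constructor
  · intro i j
    rcases Nat.eq_zero_or_pos k with rfl | hk
    · rw [hP0, hPk 1 le_rfl]
      simpa using hPent (x 1) i j
    · rw [hPk k hk, hPk (k + 1) (by omega)]
      by_cases hij : i = j
      · subst hij
        rw [show Pmat (x k) i i = if 0 ≤ x k i then 1 else 0 from Matrix.diagonal_apply_eq _ i,
          show Pmat (x (k + 1)) i i = if 0 ≤ x (k + 1) i then 1 else 0 from
            Matrix.diagonal_apply_eq _ i]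
        by_cases h : 0 ≤ x k i
        · rw [if_pos h, if_pos (key k hk i h)]
        · rw [if_neg h]
          by_cases h' : 0 ≤ x (k + 1) i <;> simp [h']
      · rw [show Pmat (x k) i j = 0 from Matrix.diagonal_apply_ne _ hij,
          show Pmat (x (k + 1)) i j = 0 from Matrix.diagonal_apply_ne _ hij]
  · intro i j
    rcases Nat.eq_zero_or_pos k with rfl | hk
    · rw [hP0]; exact le_refl 0
    · rw [hPk k hk]; exact hPent (x k) i j
end
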